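/- arXiv:2209.04012 — 8 statements merged into one kernel-verified Lean document; each statement's English description precedes it below -/
import Mathlib

section
/- For all integers n, m ≥ 0, ∑_{k=0}^{n} ∑_{l=0}^{m} binom(n,k) · binom(m,l) · ((n−k)!·(m−l)!/(n+m−k−l+1)!) · (−1)^l · B_{k+l} equals 1 if n = 0 and equals 0 if n ≥ 1. -/
open Finset

lemma beta_sum : ∀ (b a : ℕ), ∑ i ∈ range (b+1), ((b.choose i : ℚ) * (-1)^i / ((a : ℚ) + i + 1))
    = ((a.factorial * b.factorial : ℕ) : ℚ) / (((a+b+1).factorial : ℕ) : ℚ) := by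
  intro b
  induction b with
  | zero =>
    intro a
    have ha : ((a : ℚ) + 1) ≠ 0 := by positivity
    have hf : ((a.factorial : ℕ) : ℚ) ≠ 0 := Nat.cast_ne_zero.2 a.factorial_pos.ne'
    simp [Nat.factorial_succ]
    field_simp
  | succ b ih =>
    intro a
    have key : ∑ i ∈ range (b+1+1), (((b+1).choose i : ℚ) * (-1)^i / ((a : ℚ) + i + 1))
        = (∑ i ∈ range (b+1+1), ((b.choose i : ℚ) * (-1)^i / ((a : ℚ) + i + 1)))
          - (∑ i ∈ range (b+1), ((b.choose i : ℚ) * (-1)^i / (((a+1 : ℕ) : ℚ) + i + 1))) := by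
      rw [Finset.sum_range_succ' (fun i => (((b+1).choose i : ℚ) * (-1)^i / ((a : ℚ) + i + 1))) (b+1)]
      rw [Finset.sum_range_succ' (fun i => ((b.choose i : ℚ) * (-1)^i / ((a : ℚ) + i + 1))) (b+1)]
      have step : ∀ i ∈ range (b+1),
          (((b+1).choose (i+1) : ℚ) * (-1)^(i+1) / ((a : ℚ) + (i+1 : ℕ) + 1))
          = ((b.choose (i+1) : ℚ) * (-1)^(i+1) / ((a : ℚ) + (i+1 : ℕ) + 1))
            - ((b.choose i : ℚ) * (-1)^i / (((a+1 : ℕ) : ℚ) + i + 1)) := by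
        intro i _
        rw [Nat.choose_succ_succ]
        push_cast
        field_simp
        ring
      rw [Finset.sum_congr rfl step, Finset.sum_sub_distrib]
      simp [Nat.choose_zero_right]
      ring
    rw [key, Finset.sum_range_succ, Nat.choose_succ_self, ih a, ih (a+1)]
    have e1 : a + (b+1) + 1 = a + b + 2 := by omega
    have e2 : (a+1) + b + 1 = a + b + 2 := by omega
    rw [e1, e2]
    have h1 : ((a+b+1).factorial : ℚ) ≠ 0 := Nat.cast_ne_zero.2 (a+b+1).factorial_pos.ne'
    have h2 : ((a+b+2).factorial : ℚ) ≠ 0 := Nat.cast_ne_zero.2 (a+b+2).factorial_pos.ne'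
    have hfac : (a+b+2).factorial = (a+b+2) * (a+b+1).factorial := by
      rw [show a+b+2 = (a+b+1)+1 by omega, Nat.factorial_succ]
    push_cast [hfac, Nat.factorial_succ]
    field_simp
    ring


lemma vander_weight (N P : ℕ) (g : ℕ → ℚ) :
    ∑ k ∈ range (N+1), ∑ q ∈ range (P+1), (N.choose k : ℚ) * (P.choose q : ℚ) * g (k+q)
      = ∑ j ∈ range (N+P+1), ((N+P).choose j : ℚ) * g j := by
  have rhs : ∑ j ∈ range (N+P+1), ((N+P).choose j : ℚ) * g j
      = ∑ j ∈ range (N+P+1), ∑ a ∈ range (j+1),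
          (N.choose a : ℚ) * (P.choose (j-a) : ℚ) * g (a + (j-a)) := by
    refine Finset.sum_congr rfl fun j hj => ?_
    rw [Nat.add_choose_eq, Finset.Nat.sum_antidiagonal_eq_sum_range_succ_mk]
    push_cast
    rw [Finset.sum_mul]
    refine Finset.sum_congr rfl fun a ha => ?_
    simp only [mem_range, Nat.lt_succ_iff] at ha
    rw [show a + (j - a) = j by omega]
  rw [rhs, Finset.sum_range_diag_flip (N+P+1) (fun a b => (N.choose a : ℚ) * (P.choose b : ℚ) * g (a+b))]
  have outer : ∀ m_ ∈ range (N+P+1),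
      (∑ k ∈ range (N+P+1-m_), (N.choose m_ : ℚ) * (P.choose k : ℚ) * g (m_+k))
      = (if m_ ∈ range (N+1) then ∑ q ∈ range (P+1), (N.choose m_ : ℚ) * (P.choose q : ℚ) * g (m_+q) else 0) := by
    intro m_ hm_
    by_cases h : m_ ∈ range (N+1)
    · rw [if_pos h]
      simp only [mem_range, Nat.lt_succ_iff] at h
      refine (Finset.sum_subset (Finset.range_subset_range.2 (by omega)) ?_).symm
      intro k _ hk
      simp only [mem_range, not_lt] at hk
      have : P < k := by omega
      simp [Nat.choose_eq_zero_of_lt this]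
    · rw [if_neg h]
      simp only [mem_range, not_lt] at h
      have : N < m_ := by omega
      simp [Nat.choose_eq_zero_of_lt this]
  rw [Finset.sum_congr rfl outer, Finset.sum_ite_mem, Finset.inter_eq_right.2 (Finset.range_subset_range.2 (by omega))]

/-- For all integers `n, m ≥ 0`,
`∑_{k=0}^{n} ∑_{l=0}^{m} binom(n,k)·binom(m,l)·((n-k)!·(m-l)!/(n+m-k-l+1)!)·(-1)^l·B_{k+l}`
equals `1` if `n = 0` and `0` if `n ≥ 1`.  Here `B` are the Bernoulli numbers with
`B₁ = -1/2`. -/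
theorem bernoulli_double_sum (n m : ℕ) :
    ∑ k ∈ Finset.range (n + 1), ∑ l ∈ Finset.range (m + 1),
      (n.choose k : ℚ) * (m.choose l : ℚ) *
        ((((n - k).factorial * (m - l).factorial : ℕ) : ℚ) /
          (((n + m - k - l + 1).factorial : ℕ) : ℚ)) *
        (-1 : ℚ) ^ l * bernoulli (k + l) =
      if n = 0 then 1 else 0 := by
  calc
    ∑ k ∈ Finset.range (n + 1), ∑ l ∈ Finset.range (m + 1),
      (n.choose k : ℚ) * (m.choose l : ℚ) *
        ((((n - k).factorial * (m - l).factorial : ℕ) : ℚ) /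
          (((n + m - k - l + 1).factorial : ℕ) : ℚ)) *
        (-1 : ℚ) ^ l * bernoulli (k + l)
      = ∑ k ∈ range (n+1), ∑ l ∈ range (m+1), ∑ i ∈ range ((m-l)+1),
          (n.choose k : ℚ) * (m.choose l : ℚ) * ((m-l).choose i : ℚ) * ((-1 : ℚ)^l * (-1 : ℚ)^i)
            / (((n-k : ℕ) : ℚ) + (i : ℚ) + 1) * bernoulli (k + l) := by
        refine Finset.sum_congr rfl fun k hk => Finset.sum_congr rfl fun l hl => ?_
        simp only [mem_range, Nat.lt_succ_iff] at hk hl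
        rw [show n + m - k - l + 1 = (n-k) + (m-l) + 1 from by omega, ← beta_sum (m-l) (n-k),
          Finset.mul_sum, Finset.sum_mul, Finset.sum_mul]
        refine Finset.sum_congr rfl fun i _ => ?_
        ring
    _ = ∑ k ∈ range (n+1), ∑ p ∈ range (m+1), ∑ q ∈ range (p+1),
          (n.choose k : ℚ) * (m.choose q : ℚ) * ((m-q).choose (p-q) : ℚ) * ((-1 : ℚ)^q * (-1 : ℚ)^(p-q))
            / (((n-k : ℕ) : ℚ) + ((p-q : ℕ) : ℚ) + 1) * bernoulli (k + q) := by
        refine Finset.sum_congr rfl fun k _ => Eq.trans (Finset.sum_congr rfl fun l hl => ?_)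
          (Finset.sum_range_diag_flip (m+1) (fun l i =>
          (n.choose k : ℚ) * (m.choose l : ℚ) * ((m-l).choose i : ℚ) * ((-1 : ℚ)^l * (-1 : ℚ)^i)
            / (((n-k : ℕ) : ℚ) + (i : ℚ) + 1) * bernoulli (k + l))).symm
        simp only [mem_range, Nat.lt_succ_iff] at hl
        rw [show m + 1 - l = (m - l) + 1 from by omega]
    _ = ∑ p ∈ range (m+1), (m.choose p : ℚ) * (-1 : ℚ)^p *
          ∑ k ∈ range (n+1), ∑ q ∈ range (p+1),
            (n.choose k : ℚ) * (p.choose q : ℚ) *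
              (bernoulli (k+q) / (((n + p - (k+q) : ℕ) : ℚ) + 1)) := by
        rw [Finset.sum_comm]
        refine Finset.sum_congr rfl fun p hp => ?_
        simp only [mem_range, Nat.lt_succ_iff] at hp
        rw [Finset.mul_sum]
        refine Finset.sum_congr rfl fun k hk => ?_
        simp only [mem_range, Nat.lt_succ_iff] at hk
        rw [Finset.mul_sum]
        refine Finset.sum_congr rfl fun q hq => ?_
        simp only [mem_range, Nat.lt_succ_iff] at hq
        have hch : (m.choose q : ℚ) * ((m-q).choose (p-q) : ℚ) = (m.choose p : ℚ) * (p.choose q : ℚ) := by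
          exact_mod_cast congrArg (Nat.cast : ℕ → ℚ) (Nat.choose_mul (n := m) hq).symm
        have hsgn : (-1 : ℚ)^q * (-1 : ℚ)^(p-q) = (-1 : ℚ)^p := by
          rw [← pow_add, show q + (p - q) = p from by omega]
        have hd : ((n-k : ℕ) : ℚ) + ((p-q : ℕ) : ℚ) + 1 = ((n + p - (k+q) : ℕ) : ℚ) + 1 := by
          rw [← Nat.cast_add, show (n-k) + (p-q) = n + p - (k+q) from by omega]
        rw [hd, hsgn]
        rw [show (n.choose k : ℚ) * (m.choose q : ℚ) * ((m-q).choose (p-q) : ℚ)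
            = (n.choose k : ℚ) * ((m.choose q : ℚ) * ((m-q).choose (p-q) : ℚ)) from by ring, hch]
        ring
    _ = ∑ p ∈ range (m+1), (m.choose p : ℚ) * (-1 : ℚ)^p *
          ((1 / ((n : ℚ) + (p : ℚ) + 1)) *
            ∑ j ∈ range (n+p+1), ((n+p+1).choose j : ℚ) * bernoulli j) := by
        refine Finset.sum_congr rfl fun p _ => ?_
        rw [vander_weight n p (fun j => bernoulli j / (((n + p - j : ℕ) : ℚ) + 1)),
          Finset.mul_sum, Finset.mul_sum, Finset.mul_sum]
        refine Finset.sum_congr rfl fun j hj => ?_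
        simp only [mem_range, Nat.lt_succ_iff] at hj
        have hc : ((n+p).choose j : ℚ) * ((n : ℚ) + (p : ℚ) + 1)
            = ((n+p+1).choose j : ℚ) * (((n + p - j : ℕ) : ℚ) + 1) := by
          have h := Nat.choose_mul_succ_eq (n+p) j
          rw [show n + p + 1 - j = (n + p - j) + 1 from by omega] at h
          exact_mod_cast h
        have h1 : ((n : ℚ) + (p : ℚ) + 1) ≠ 0 := by positivity
        have h2 : (((n + p - j : ℕ) : ℚ) + 1) ≠ 0 := by positivity
        have key : ((n+p).choose j : ℚ) * (bernoulli j / (((n + p - j : ℕ) : ℚ) + 1))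
            = 1/((n : ℚ) + (p : ℚ) + 1) * (((n+p+1).choose j : ℚ) * bernoulli j) := by
          generalize ((n + p - j : ℕ) : ℚ) = d at hc h2 ⊢
          field_simp
          linear_combination bernoulli j * hc
        rw [key]
    _ = if n = 0 then 1 else 0 := by
        rw [Finset.sum_congr rfl fun p _ => by rw [sum_bernoulli (n+p+1)]]
        rcases Nat.eq_zero_or_pos n with hn | hn
        · subst hn
          rw [if_pos rfl]
          rw [Finset.sum_eq_single_of_mem 0 (by simp)]
          · norm_num
          · intro p _ hp
            rw [if_neg (by omega)]
            ring
        · rw [if_neg (by omega)]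
          refine Finset.sum_eq_zero fun p _ => ?_
          rw [if_neg (by omega)]
          ring
end

section
/- Let a : ℕ → ℚ be any sequence and let b : ℕ → ℚ be its binomial transform, b_n = ∑_{k=0}^{n} binom(n,k) · a_k. Then for all integers n, m ≥ 0, ∑_{k=0}^{m} binom(m,k) · a_{n+k+1}/(n+k+1) = ∑_{k=0}^{n} (−1)^{n−k} · binom(n,k) · b_{m+k+1}/(m+k+1) + (−1)^{n+1} · a_0/((m+n+1) · binom(m+n,n)). -/
lemma pascal_sum (m : ℕ) (g : ℕ → ℚ) :
    ∑ k ∈ Finset.range (m+2), ((m+1).choose k : ℚ) * g k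
      = ∑ k ∈ Finset.range (m+1), (m.choose k : ℚ) * g k
        + ∑ k ∈ Finset.range (m+1), (m.choose k : ℚ) * g (k+1) := by
  rw [Finset.sum_range_succ' (fun k => ((m+1).choose k : ℚ) * g k) (m+1)]
  rw [Finset.sum_range_succ' (fun k => (m.choose k : ℚ) * g k) m]
  have h1 : ∀ k ∈ Finset.range (m+1), ((m+1).choose (k+1) : ℚ) * g (k+1)
      = (m.choose k : ℚ) * g (k+1) + (m.choose (k+1) : ℚ) * g (k+1) := by
    intro k _
    rw [Nat.choose_succ_succ]
    push_cast
    ring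
  rw [Finset.sum_congr rfl h1, Finset.sum_add_distrib]
  have h2 : ∑ k ∈ Finset.range (m+1), (m.choose (k+1) : ℚ) * g (k+1)
      = ∑ k ∈ Finset.range m, (m.choose (k+1) : ℚ) * g (k+1) := by
    rw [Finset.sum_range_succ, Nat.choose_succ_self]
    simp
  rw [h2]
  simp
  ring

lemma binom_aux (a0 c C1 C2 A mm nn : ℚ)
    (hq1 : (mm + nn + 1) * c = C2 * (nn+1)) (hq2 : (mm + nn + 1) * c = C1 * (mm+1))
    (hc : c ≠ 0) (h1 : C1 ≠ 0) (h2 : C2 ≠ 0)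
    (hqne : mm + nn + 1 ≠ 0) (hq1ne : mm + nn + 2 ≠ 0) :
    A * -1 * (a0 / ((mm + (nn+1) + 1) * C2)) =
      A * (a0/((mm+1+nn+1) * C1)) - A * (a0/((mm+nn+1)*c)) := by
  have hkey : (mm+nn+1) * c * (C1 + C2) = (mm+nn+2) * (C1 * C2) := by
    linear_combination C1 * hq1 + C2 * hq2
  have hne : (mm + (nn+1) + 1) ≠ 0 := by intro h; exact hq1ne (by linarith)
  have hne2 : (mm+1+nn+1) ≠ 0 := by intro h; exact hq1ne (by linarith)
  field_simp
  ring_nf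
  linear_combination (-(A * a0 * (mm+nn+2))) * hkey

/-- Let `a : ℕ → ℚ` be any sequence and `b` its binomial transform,
`b n = ∑_{k=0}^{n} binom(n,k) · a k`.  Then for all `n, m ≥ 0`,
`∑_{k=0}^{m} binom(m,k) · a_{n+k+1}/(n+k+1)
  = ∑_{k=0}^{n} (-1)^{n-k} · binom(n,k) · b_{m+k+1}/(m+k+1)
    + (-1)^{n+1} · a₀ / ((m+n+1) · binom(m+n,n))`. -/
theorem binomial_transform_identity (a b : ℕ → ℚ)
    (hb : ∀ n, b n = ∑ k ∈ Finset.range (n + 1), (n.choose k : ℚ) * a k) (n m : ℕ) :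
    ∑ k ∈ Finset.range (m + 1), (m.choose k : ℚ) * a (n + k + 1) / ((n : ℚ) + k + 1) =
      (∑ k ∈ Finset.range (n + 1),
        (-1 : ℚ) ^ (n - k) * (n.choose k : ℚ) * b (m + k + 1) / ((m : ℚ) + k + 1)) +
      (-1 : ℚ) ^ (n + 1) * a 0 / (((m : ℚ) + n + 1) * ((m + n).choose n : ℚ)) := by
  induction n generalizing m with
  | zero =>
    simp only [Nat.zero_eq, Finset.sum_range_one, Nat.sub_zero, pow_zero, Nat.choose_zero_right,
      Nat.cast_zero, Nat.add_zero, Nat.cast_one, zero_add, add_zero, one_mul, pow_one]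
    rw [hb (m+1), Finset.sum_range_succ' (fun k => ((m+1).choose k : ℚ) * a k) (m+1)]
    have hm : ((m:ℚ)+1) ≠ 0 := by positivity
    have key : ∀ k ∈ Finset.range (m+1), (m.choose k : ℚ) * a (k + 1) / ((k:ℚ) + 1)
        = ((m+1).choose (k+1) : ℚ) * a (k+1) / ((m:ℚ)+1) := by
      intro k _
      have h := Nat.add_one_mul_choose_eq m k
      have h' : ((m:ℚ)+1) * (m.choose k : ℚ) = ((m+1).choose (k+1) : ℚ) * ((k:ℚ)+1) := by
        exact_mod_cast h
      have hk : ((k:ℚ)+1) ≠ 0 := by positivity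
      field_simp
      linear_combination a (k+1) * h'
    rw [Finset.sum_congr rfl key]
    rw [add_div, Finset.sum_div]
    simp
    ring
  | succ n ih =>
    have A1 := ih m
    have A2 := ih (m+1)
    push_cast at A2 ⊢
    have hps := pascal_sum m (fun k => a (n + k + 1) / ((n : ℚ) + k + 1))
    simp only [mul_div_assoc] at hps A1 A2 ⊢
    simp only [show m+(n+1) = m+n+1 from by omega, show m+1+n = m+n+1 from by omega,
      show m+1+1 = m+2 from rfl, show n+1+1 = n+2 from rfl] at A2 ⊢
    have hgL : ∑ x ∈ Finset.range (m + 1), (m.choose x : ℚ) * (a (n + 1 + x + 1) / ((n:ℚ) + 1 + x + 1))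
        = ∑ x ∈ Finset.range (m + 1), (m.choose x : ℚ) * (a (n + (x+1) + 1) / ((n:ℚ) + ↑(x+1) + 1)) := by
      refine Finset.sum_congr rfl fun k _ => ?_
      have hidx : n + 1 + k + 1 = n + (k + 1) + 1 := by omega
      rw [hidx]; push_cast; ring
    rw [hgL]
    have hsum : ∑ x ∈ Finset.range (n + 2), (-1:ℚ) ^ (n + 1 - x) * ((n + 1).choose x : ℚ) * (b (m + x + 1) / ((m:ℚ) + x + 1))
        = (∑ x ∈ Finset.range (n + 1), (-1:ℚ) ^ (n - x) * (n.choose x : ℚ) * (b (m + 1 + x + 1) / ((m:ℚ) + 1 + x + 1)))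
          - ∑ x ∈ Finset.range (n + 1), (-1:ℚ) ^ (n - x) * (n.choose x : ℚ) * (b (m + x + 1) / ((m:ℚ) + x + 1)) := by
      have hp := pascal_sum n (fun k => (-1:ℚ) ^ (n + 1 - k) * (b (m + k + 1) / ((m:ℚ) + k + 1)))
      rw [show (∑ x ∈ Finset.range (n+2), (-1:ℚ)^(n+1-x) * ((n+1).choose x:ℚ) * (b (m+x+1)/((m:ℚ)+x+1)))
          = ∑ x ∈ Finset.range (n+2), ((n+1).choose x : ℚ) * ((-1:ℚ)^(n+1-x) * (b (m+x+1)/((m:ℚ)+x+1)))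
          from Finset.sum_congr rfl fun k _ => by ring]
      rw [hp]
      have e1 : ∀ k ∈ Finset.range (n+1), (n.choose k : ℚ) * ((-1:ℚ)^(n+1-k) * (b (m+k+1)/((m:ℚ)+k+1)))
          = -((-1:ℚ)^(n-k) * (n.choose k:ℚ) * (b (m+k+1)/((m:ℚ)+k+1))) := by
        intro k hk
        have hkn : n + 1 - k = (n - k) + 1 := by
          have := Finset.mem_range.mp hk; omega
        rw [hkn, pow_succ]; ring
      have e2 : ∀ k ∈ Finset.range (n+1), (n.choose k : ℚ) * ((-1:ℚ)^(n+1-(k+1)) * (b (m+(k+1)+1)/((m:ℚ)+↑(k+1)+1)))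
          = (-1:ℚ)^(n-k) * (n.choose k:ℚ) * (b (m+1+k+1)/((m:ℚ)+1+k+1)) := by
        intro k hk
        have h1 : n + 1 - (k+1) = n - k := by omega
        have h2 : m + (k+1) + 1 = m + 1 + k + 1 := by omega
        rw [h1, h2]; push_cast; ring
      rw [Finset.sum_congr rfl e1, Finset.sum_congr rfl e2]
      rw [Finset.sum_neg_distrib]
      ring
    have ha0 : (-1:ℚ)^(n+2) * (a 0 / (((m:ℚ) + ((n:ℚ) + 1) + 1) * (((m+n+1).choose (n+1)) : ℚ)))
        = (-1:ℚ)^(n+1) * (a 0 / (((m:ℚ) + 1 + (n:ℚ) + 1) * (((m+n+1).choose n) : ℚ)))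
          - (-1:ℚ)^(n+1) * (a 0 / (((m:ℚ) + (n:ℚ) + 1) * (((m+n).choose n) : ℚ))) := by
      have h1 : (m+n+1) * ((m+n).choose n) = ((m+n+1).choose (n+1)) * (n+1) :=
        Nat.add_one_mul_choose_eq (m+n) n
      have hs1 : (m+n).choose n = (m+n).choose m := by
        have := Nat.choose_symm (Nat.le_add_right m n)
        simpa [show m+n-m = n from by omega] using this
      have hs2 : (m+n+1).choose n = (m+n+1).choose (m+1) := by
        have := Nat.choose_symm (show m+1 ≤ m+n+1 by omega)
        simpa [show m+n+1-(m+1) = n from by omega] using this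
      have h2 : (m+n+1) * ((m+n).choose n) = ((m+n+1).choose n) * (m+1) := by
        rw [hs1, hs2]
        exact Nat.add_one_mul_choose_eq (m+n) m
      have hq1 : ((m:ℚ)+n+1) * (((m+n).choose n : ℕ) : ℚ) = (((m+n+1).choose (n+1) : ℕ) : ℚ) * ((n:ℚ)+1) := by
        exact_mod_cast h1
      have hq2 : ((m:ℚ)+n+1) * (((m+n).choose n : ℕ) : ℚ) = (((m+n+1).choose n : ℕ) : ℚ) * ((m:ℚ)+1) := by
        exact_mod_cast h2
      have hc1 : (((m+n).choose n : ℕ) : ℚ) ≠ 0 := by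
        exact_mod_cast (Nat.choose_pos (Nat.le_add_left n m)).ne'
      have hc2 : (((m+n+1).choose (n+1) : ℕ) : ℚ) ≠ 0 := by
        exact_mod_cast (Nat.choose_pos (show n+1 ≤ m+n+1 by omega)).ne'
      have hc3 : (((m+n+1).choose n : ℕ) : ℚ) ≠ 0 := by
        exact_mod_cast (Nat.choose_pos (show n ≤ m+n+1 by omega)).ne'
      have hd1 : ((m:ℚ)+n+1) ≠ 0 := by positivity
      have hd2 : ((m:ℚ)+n+2) ≠ 0 := by positivity
      rw [pow_succ]
      exact binom_aux (a 0) _ _ _ _ (m:ℚ) (n:ℚ) hq1 hq2 hc1 hc3 hc2 hd1 hd2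
    linarith [hps, A1, A2, hsum, ha0]
end

section
/- Efficiency of n-Shapley Values: for every value function v, every x ∈ ℝ^d and every n with 1 ≤ n ≤ d, ∑_{S ⊆ [d], 1 ≤ |S| ≤ n} Φ^n_S(x) = v(x,[d]) − v(x,∅). -/
open Finset

/-- The measure of contribution `Δ_S(x)` associated with a value function `v` on
`d` features: `Δ_S(x) = ∑_{T ⊆ [d]∖S} ((d-|T|-|S|)!·|T|!/(d-|S|+1)!) ·
∑_{L ⊆ S} (-1)^{|S|-|L|} · v(x, L ∪ T)`. -/
noncomputable def deltaContribution (d : ℕ) (v : (Fin d → ℝ) → Finset (Fin d) → ℝ)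
    (x : Fin d → ℝ) (S : Finset (Fin d)) : ℝ :=
  ∑ T ∈ Sᶜ.powerset,
    (((d - T.card - S.card).factorial * T.card.factorial : ℕ) : ℝ) /
        (((d - S.card + 1).factorial : ℕ) : ℝ) *
      ∑ L ∈ S.powerset, (-1 : ℝ) ^ (S.card - L.card) * v x (L ∪ T)

/-- The `n`-Shapley Value of a subset `S` at a point `x`, for a value function `v`:
`Φ^n_S(x) = ∑_{k=0}^{n-|S|} ∑_{K ⊆ [d]∖S, |K| = k} B_k · Δ_{S∪K}(x)`, where `B_k`
are the Bernoulli numbers with `B₁ = -1/2`. -/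
noncomputable def nShapley (d : ℕ) (v : (Fin d → ℝ) → Finset (Fin d) → ℝ)
    (n : ℕ) (x : Fin d → ℝ) (S : Finset (Fin d)) : ℝ :=
  ∑ k ∈ Finset.range (n - S.card + 1),
    ∑ K ∈ Sᶜ.powerset.filter (fun K => K.card = k),
      (bernoulli k : ℝ) * deltaContribution d v x (S ∪ K)

section Helpers

variable {α : Type*} [DecidableEq α]

/-- Reindex a sum over supersets of `A` inside `U` as a sum over subsets of `U \ A`. -/
lemma sum_supersets {A U : Finset α} (hAU : A ⊆ U) (f : Finset α → ℝ) :
    ∑ W ∈ U.powerset.filter (fun W => A ⊆ W), f W = ∑ R ∈ (U \ A).powerset, f (A ∪ R) := by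
  refine Finset.sum_nbij' (fun W => W \ A) (fun R => A ∪ R) ?_ ?_ ?_ ?_ ?_
  · intro W hW
    simp only [mem_filter, mem_powerset] at hW ⊢
    exact sdiff_subset_sdiff hW.1 (le_refl _)
  · intro R hR
    simp only [mem_powerset] at hR
    simp only [mem_filter, mem_powerset]
    exact ⟨union_subset hAU (hR.trans sdiff_subset), subset_union_left⟩
  · intro W hW
    simp only [mem_filter, mem_powerset] at hW
    exact union_sdiff_of_subset hW.2
  · intro R hR
    simp only [mem_powerset] at hR
    exact union_sdiff_cancel_left (disjoint_sdiff.mono_right hR)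
  · intro W hW
    simp only [mem_filter, mem_powerset] at hW
    rw [union_sdiff_of_subset hW.2]

/-- Alternating sum over an interval of the subset lattice. -/
lemma sum_alt_interval {L U : Finset α} (hLU : L ⊆ U) :
    ∑ W ∈ U.powerset.filter (fun W => L ⊆ W), (-1 : ℝ) ^ (W.card - L.card)
      = if U = L then 1 else 0 := by
  rw [sum_supersets hLU]
  have h1 : ∀ R ∈ (U \ L).powerset, (-1 : ℝ) ^ ((L ∪ R).card - L.card) = (-1 : ℝ) ^ R.card := by
    intro R hR
    simp only [mem_powerset] at hR
    rw [card_union_of_disjoint (disjoint_sdiff.mono_right hR), Nat.add_sub_cancel_left]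
  rw [sum_congr rfl h1]
  have h2 : ((∑ m ∈ (U \ L).powerset, (-1 : ℤ) ^ m.card : ℤ) : ℝ)
      = ∑ m ∈ (U \ L).powerset, (-1 : ℝ) ^ m.card := by push_cast; rfl
  rw [← h2, Finset.sum_powerset_neg_one_pow_card]
  have h3 : U \ L = ∅ ↔ U = L := by
    rw [sdiff_eq_empty_iff_subset]
    exact ⟨fun h => subset_antisymm h hLU, fun h => h ▸ subset_rfl⟩
  by_cases h : U = L
  · simp [h3.mpr h, h]
  · rw [if_neg (fun hc => h (h3.mp hc)), if_neg h]
    norm_num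

/-- Sum over powerset of a disjoint union. -/
lemma sum_powerset_disjUnion {A B : Finset α} (h : Disjoint A B) (f : Finset α → ℝ) :
    ∑ W ∈ (A ∪ B).powerset, f W = ∑ P ∈ A.powerset, ∑ Q ∈ B.powerset, f (P ∪ Q) := by
  rw [← Finset.sum_product']
  refine Finset.sum_nbij' (fun W => (W ∩ A, W ∩ B)) (fun PQ => PQ.1 ∪ PQ.2) ?_ ?_ ?_ ?_ ?_
  · intro W hW
    simp only [mem_powerset] at hW
    simp only [Finset.mem_product, mem_powerset]
    exact ⟨inter_subset_right, inter_subset_right⟩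
  · intro PQ hPQ
    simp only [Finset.mem_product, mem_powerset] at hPQ
    simp only [mem_powerset]
    exact union_subset (hPQ.1.trans subset_union_left) (hPQ.2.trans subset_union_right)
  · intro W hW
    simp only [mem_powerset] at hW
    simp only [← inter_union_distrib_left]
    exact inter_eq_left.mpr hW
  · intro PQ hPQ
    simp only [Finset.mem_product, mem_powerset] at hPQ
    have h1 : ((PQ.1 ∪ PQ.2) ∩ A) = PQ.1 := by
      rw [union_inter_distrib_right, inter_eq_left.mpr hPQ.1,
        disjoint_iff_inter_eq_empty.mp (h.symm.mono_left hPQ.2), union_empty]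
    have h2 : ((PQ.1 ∪ PQ.2) ∩ B) = PQ.2 := by
      rw [union_inter_distrib_right, inter_eq_left.mpr hPQ.2,
        disjoint_iff_inter_eq_empty.mp (h.mono_left hPQ.1), empty_union]
    ext <;> simp [h1, h2]
  · intro W hW
    simp only [mem_powerset] at hW
    simp only [← inter_union_distrib_left]
    rw [inter_eq_left.mpr hW]

/-- Swap a double powerset sum. -/
lemma swap_powerset (U : Finset α) (g : Finset α → Finset α → ℝ) :
    ∑ W ∈ U.powerset, ∑ L ∈ W.powerset, g W L
      = ∑ L ∈ U.powerset, ∑ W ∈ U.powerset.filter (fun W => L ⊆ W), g W L := by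
  have h1 : ∀ W ∈ U.powerset, ∑ L ∈ W.powerset, g W L
      = ∑ L ∈ U.powerset, if L ⊆ W then g W L else 0 := by
    intro W hW
    rw [← Finset.sum_filter]
    apply Finset.sum_congr _ (fun _ _ => rfl)
    ext L
    simp only [mem_powerset, mem_filter]
    simp only [mem_powerset] at hW
    exact ⟨fun h => ⟨h.trans hW, h⟩, fun h => h.2⟩
  rw [sum_congr rfl h1, Finset.sum_comm]
  exact sum_congr rfl fun L _ => (Finset.sum_filter _ _).symm

end Helpers
open Finset

/-- The Shapley weight identity, natural number form. -/
lemma weight_nat (M r : ℕ) (hr : r ≤ M) :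
    ∑ j ∈ range (M - r + 1), (M - r).choose j * ((M - (r + j)).factorial * (r + j).factorial)
      = (M - r).factorial * r.factorial * (M + 1).choose (r + 1) := by
  have h1 : ∀ j ∈ range (M - r + 1),
      (M - r).choose j * ((M - (r + j)).factorial * (r + j).factorial)
        = (M - r).factorial * (r.factorial * (r + j).choose r) := by
    intro j hj
    rw [mem_range, Nat.lt_succ_iff] at hj
    have hjr : r + j ≤ M := by omega
    have e1 : M - (r + j) = (M - r) - j := by omega
    -- choose j * (M-r-j)! * j! = (M-r)!
    have e2 : (M - r).choose j * j.factorial * ((M - r) - j).factorial = (M - r).factorial :=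
      Nat.choose_mul_factorial_mul_factorial hj
    have e3 : (r + j).choose r * r.factorial * j.factorial = (r + j).factorial := by
      have := Nat.choose_mul_factorial_mul_factorial (Nat.le_add_right r j)
      simpa using this
    calc (M - r).choose j * ((M - (r + j)).factorial * (r + j).factorial)
        = (M - r).choose j * j.factorial * ((M - r) - j).factorial *
            ((r + j).choose r * r.factorial) := by
          rw [e1, ← e3]; ring
      _ = (M - r).factorial * (r.factorial * (r + j).choose r) := by rw [e2]; ring
  rw [Finset.sum_congr rfl h1, ← Finset.mul_sum, ← Finset.mul_sum]
  have h2 : ∑ j ∈ range (M - r + 1), (r + j).choose r = (M + 1).choose (r + 1) := by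
    rw [← Nat.sum_Icc_choose M r, ← Finset.Ico_add_one_right_eq_Icc, Finset.sum_Ico_eq_sum_range]
    have : M + 1 - r = M - r + 1 := by omega
    rw [this]
  rw [h2]; ring

/-- The Shapley weight identity over ℝ. -/
lemma weight_real (M r : ℕ) (hr : r ≤ M) :
    ∑ j ∈ range (M - r + 1), ((M - r).choose j : ℝ) *
        (((M - (r + j)).factorial * (r + j).factorial : ℕ) : ℝ) / ((M + 1).factorial : ℝ)
      = 1 / (r + 1) := by
  have hfac : ((M + 1).factorial : ℝ) ≠ 0 := Nat.cast_ne_zero.mpr (Nat.factorial_ne_zero _)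
  have h0 := weight_nat M r hr
  calc ∑ j ∈ range (M - r + 1), ((M - r).choose j : ℝ) *
        (((M - (r + j)).factorial * (r + j).factorial : ℕ) : ℝ) / ((M + 1).factorial : ℝ)
      = (((∑ j ∈ range (M - r + 1), (M - r).choose j *
          ((M - (r + j)).factorial * (r + j).factorial) : ℕ)) : ℝ) / ((M + 1).factorial : ℝ) := by
        rw [Nat.cast_sum, Finset.sum_div]
        exact Finset.sum_congr rfl fun j _ => by push_cast; ring
    _ = (((M - r).factorial * r.factorial * (M + 1).choose (r + 1) : ℕ) : ℝ) /
          ((M + 1).factorial : ℝ) := by rw [h0]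
    _ = 1 / (r + 1) := by
        have key : ((M - r).factorial * r.factorial * (M + 1).choose (r + 1)) * (r + 1)
            = (M + 1).factorial := by
          have h3 : (M + 1).choose (r + 1) * (r + 1).factorial * ((M + 1) - (r + 1)).factorial
              = (M + 1).factorial := Nat.choose_mul_factorial_mul_factorial (by omega)
          have h4 : (M + 1) - (r + 1) = M - r := by omega
          rw [h4, Nat.factorial_succ] at h3
          calc ((M - r).factorial * r.factorial * (M + 1).choose (r + 1)) * (r + 1)
              = (M + 1).choose (r + 1) * ((r + 1) * r.factorial) * (M - r).factorial := by ring
            _ = (M + 1).factorial := h3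
        rw [div_eq_div_iff hfac (by positivity), one_mul, ← key]
        push_cast; ring
open Finset

/-- `C(m,k)/(m-k+1) = C(m+1,k)/(m+1)` over ℚ. -/
lemma choose_div_succ_eq (m k : ℕ) (hk : k ≤ m) :
    (m.choose k : ℚ) / ((m - k : ℕ) + 1) = ((m + 1).choose k : ℚ) / (m + 1) := by
  have h := Nat.choose_mul_succ_eq m k
  have h2 : m + 1 - k = (m - k) + 1 := by omega
  rw [h2] at h
  rw [div_eq_div_iff (by positivity) (by positivity)]
  exact_mod_cast h

/-- Sum over `range (n+1)` splits off the `0` term and `Icc 1 n`. -/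
lemma sum_range_succ_eq_icc {M : Type*} [AddCommMonoid M] (f : ℕ → M) (n : ℕ) :
    ∑ k ∈ range (n + 1), f k = f 0 + ∑ k ∈ Icc 1 n, f k := by
  rw [← Finset.Ico_add_one_right_eq_Icc, Finset.sum_Ico_eq_sum_range]
  rw [Finset.sum_range_succ']
  have : n + 1 - 1 = n := by omega
  rw [this, add_comm]
  congr 1
  exact Finset.sum_congr rfl fun i _ => by rw [add_comm 1 i]

/-- The key Bernoulli identity `H(n) = w + 1` for `1 ≤ n ≤ w`. -/
lemma bernoulli_H (w : ℕ) : ∀ n, 1 ≤ n → n ≤ w →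
    ∑ s ∈ Icc 1 n, ((w + 1).choose s : ℚ) *
        ∑ k ∈ range (n - s + 1), ((w - s + 1).choose k : ℚ) * bernoulli k = (w + 1 : ℚ) := by
  intro n
  induction n with
  | zero => omega
  | succ n ih =>
    intro _ hnw
    by_cases h0 : n = 0
    · -- n + 1 = 1
      subst h0
      norm_num [Finset.Icc_self, Nat.choose_one_right, bernoulli_zero]
    · -- n ≥ 1
      have hn1 : 1 ≤ n := by omega
      have hnw' : n ≤ w := by omega
      have hih := ih hn1 hnw'
      -- split top of Icc
      rw [← Finset.Ico_add_one_right_eq_Icc, Finset.sum_Ico_succ_top (by omega), Finset.Ico_add_one_right_eq_Icc]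
      -- the top term: s = n+1, inner sum is range 1
      have htop : ∑ k ∈ range (n + 1 - (n + 1) + 1), ((w - (n + 1) + 1).choose k : ℚ) * bernoulli k
          = 1 := by
        have : n + 1 - (n + 1) + 1 = 1 := by omega
        rw [this]
        simp [bernoulli_zero]
      rw [htop, mul_one]
      -- split each inner sum
      have hsplit : ∀ s ∈ Icc 1 n,
          ((w + 1).choose s : ℚ) * ∑ k ∈ range (n + 1 - s + 1), ((w - s + 1).choose k : ℚ) * bernoulli k
            = ((w + 1).choose s : ℚ) * ∑ k ∈ range (n - s + 1), ((w - s + 1).choose k : ℚ) * bernoulli k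
              + ((w + 1).choose s : ℚ) * (((w - s + 1).choose (n + 1 - s) : ℚ) * bernoulli (n + 1 - s)) := by
        intro s hs
        rw [mem_Icc] at hs
        have h3 : n + 1 - s = n - s + 1 := by omega
        rw [h3, Finset.sum_range_succ, mul_add]
      rw [Finset.sum_congr rfl hsplit, Finset.sum_add_distrib, hih]
      -- remains: new terms + top = 0
      have hD : ∑ s ∈ Icc 1 n, ((w + 1).choose s : ℚ) *
            (((w - s + 1).choose (n + 1 - s) : ℚ) * bernoulli (n + 1 - s))
          + ((w + 1).choose (n + 1) : ℚ) = 0 := by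
        -- reindex k = n + 1 - s
        have hre : ∑ s ∈ Icc 1 n, ((w + 1).choose s : ℚ) *
              (((w - s + 1).choose (n + 1 - s) : ℚ) * bernoulli (n + 1 - s))
            = ∑ k ∈ Icc 1 n, ((w + 1).choose (n + 1) : ℚ) * (((n + 1).choose k : ℚ) * bernoulli k) := by
          refine Finset.sum_nbij' (fun s => n + 1 - s) (fun k => n + 1 - k) ?_ ?_ ?_ ?_ ?_
          · intro s hs; simp only [mem_Icc] at hs ⊢; omega
          · intro k hk; simp only [mem_Icc] at hk ⊢; omega
          · intro s hs; rw [mem_Icc] at hs; show n + 1 - (n + 1 - s) = s; omega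
          · intro k hk; rw [mem_Icc] at hk; show n + 1 - (n + 1 - k) = k; omega
          · intro s hs
            rw [mem_Icc] at hs
            -- choose product identity
            have hcm := Nat.choose_mul (n := w + 1) (k := n + 1) (s := s) (by omega)
            have harg2 : w + 1 - s = w - s + 1 := by omega
            have hsym : (n + 1).choose s = (n + 1).choose (n + 1 - s) :=
              (Nat.choose_symm (by omega : s ≤ n + 1)).symm
            have hnat : (w + 1).choose s * (w - s + 1).choose (n + 1 - s)
                = (w + 1).choose (n + 1) * (n + 1).choose (n + 1 - s) := by
              have harg2 : w + 1 - s = w - s + 1 := by omega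
              rw [← harg2, ← hcm, hsym]
            have : ((w + 1).choose s : ℚ) * ((w - s + 1).choose (n + 1 - s) : ℚ)
                = ((w + 1).choose (n + 1) : ℚ) * ((n + 1).choose (n + 1 - s) : ℚ) := by
              exact_mod_cast congrArg (fun t : ℕ => (t : ℚ)) hnat
            calc ((w + 1).choose s : ℚ) * (((w - s + 1).choose (n + 1 - s) : ℚ) * bernoulli (n + 1 - s))
                = (((w + 1).choose s : ℚ) * ((w - s + 1).choose (n + 1 - s) : ℚ)) * bernoulli (n + 1 - s) := by ring
              _ = ((w + 1).choose (n + 1) : ℚ) * (((n + 1).choose (n + 1 - s) : ℚ) * bernoulli (n + 1 - s)) := by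
                  rw [this]; ring
        rw [hre, ← Finset.mul_sum]
        have hsb : ∑ k ∈ Icc 1 n, ((n + 1).choose k : ℚ) * bernoulli k = -1 := by
          have h := sum_bernoulli (n + 1)
          rw [if_neg (by omega)] at h
          rw [sum_range_succ_eq_icc (fun k => ((n + 1).choose k : ℚ) * bernoulli k) n] at h
          simp only [Nat.choose_zero_right, Nat.cast_one, bernoulli_zero, one_mul] at h
          linarith
        rw [hsb]; ring
      linarith [hD]

/-- The central combinatorial identity over ℚ. -/
lemma key_identity (w n : ℕ) (hw : 1 ≤ w) (hn : 1 ≤ n) :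
    ∑ s ∈ range (w + 1), (w.choose s : ℚ) *
        (if 1 ≤ s ∧ s ≤ n then
          ∑ k ∈ range (w - s + 1), ((w - s).choose k : ℚ) *
            (if k ≤ n - s then bernoulli k / ((w - s - k : ℕ) + 1) else 0)
        else 0) = 1 := by
  set n' := min n w with hn'
  have hn'1 : 1 ≤ n' := le_min hn hw
  have hn'w : n' ≤ w := min_le_right n w
  have hw1 : ((w : ℚ) + 1) ≠ 0 := by positivity
  -- Step A: the s-sum restricts to Icc 1 n'
  have hA : ∑ s ∈ range (w + 1), (w.choose s : ℚ) *
        (if 1 ≤ s ∧ s ≤ n then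
          ∑ k ∈ range (w - s + 1), ((w - s).choose k : ℚ) *
            (if k ≤ n - s then bernoulli k / ((w - s - k : ℕ) + 1) else 0)
        else 0)
      = ∑ s ∈ Icc 1 n', (w.choose s : ℚ) *
          ∑ k ∈ range (w - s + 1), ((w - s).choose k : ℚ) *
            (if k ≤ n - s then bernoulli k / ((w - s - k : ℕ) + 1) else 0) := by
    simp only [mul_ite, mul_zero]
    rw [← Finset.sum_filter]
    apply Finset.sum_congr _ (fun _ _ => rfl)
    ext t
    simp only [mem_filter, mem_range, mem_Icc]
    omega
  rw [hA]
  -- Step B: each inner sum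
  have hB : ∀ s ∈ Icc 1 n', (w.choose s : ℚ) *
        ∑ k ∈ range (w - s + 1), ((w - s).choose k : ℚ) *
          (if k ≤ n - s then bernoulli k / ((w - s - k : ℕ) + 1) else 0)
      = ((w + 1).choose s : ℚ) / (w + 1) *
          ∑ k ∈ range (n' - s + 1), ((w - s + 1).choose k : ℚ) * bernoulli k := by
    intro s hs
    rw [mem_Icc] at hs
    have hsw : s ≤ w := le_trans hs.2 hn'w
    -- restrict inner sum
    have hB1 : ∑ k ∈ range (w - s + 1), ((w - s).choose k : ℚ) *
          (if k ≤ n - s then bernoulli k / ((w - s - k : ℕ) + 1) else 0)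
        = ∑ k ∈ range (n' - s + 1), ((w - s).choose k : ℚ) *
            (bernoulli k / ((w - s - k : ℕ) + 1)) := by
      simp only [mul_ite, mul_zero]
      rw [← Finset.sum_filter]
      apply Finset.sum_congr _ (fun _ _ => rfl)
      ext t
      simp only [mem_filter, mem_range]
      omega
    rw [hB1, Finset.mul_sum, Finset.mul_sum]
    apply Finset.sum_congr rfl
    intro k hk
    rw [mem_range] at hk
    have hk1 : k ≤ w - s := by omega
    have e1 : ((w - s).choose k : ℚ) / ((w - s - k : ℕ) + 1)
        = ((w - s + 1).choose k : ℚ) / ((w - s : ℕ) + 1) := choose_div_succ_eq (w - s) k hk1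
    have e2 : (w.choose s : ℚ) / ((w - s : ℕ) + 1) = ((w + 1).choose s : ℚ) / ((w : ℕ) + 1) :=
      choose_div_succ_eq w s hsw
    calc (w.choose s : ℚ) * (((w - s).choose k : ℚ) * (bernoulli k / ((w - s - k : ℕ) + 1)))
        = (((w - s).choose k : ℚ) / ((w - s - k : ℕ) + 1)) * ((w.choose s : ℚ) * bernoulli k) := by
          ring
      _ = (((w - s + 1).choose k : ℚ) / ((w - s : ℕ) + 1)) * ((w.choose s : ℚ) * bernoulli k) := by
          rw [e1]
      _ = ((w.choose s : ℚ) / ((w - s : ℕ) + 1)) * (((w - s + 1).choose k : ℚ) * bernoulli k) := by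
          ring
      _ = (((w + 1).choose s : ℚ) / ((w : ℕ) + 1)) * (((w - s + 1).choose k : ℚ) * bernoulli k) := by
          rw [e2]
      _ = _ := by ring
  rw [Finset.sum_congr rfl hB]
  have : ∑ s ∈ Icc 1 n', ((w + 1).choose s : ℚ) / (w + 1) *
      ∑ k ∈ range (n' - s + 1), ((w - s + 1).choose k : ℚ) * bernoulli k
      = (1 / (w + 1)) * ∑ s ∈ Icc 1 n', ((w + 1).choose s : ℚ) *
          ∑ k ∈ range (n' - s + 1), ((w - s + 1).choose k : ℚ) * bernoulli k := by
    rw [Finset.mul_sum]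
    exact Finset.sum_congr rfl fun s _ => by ring
  rw [this, bernoulli_H w n' hn'1 hn'w]
  field_simp

/-- Real version of the key identity. -/
lemma key_identity_real (w n : ℕ) (hw : 1 ≤ w) (hn : 1 ≤ n) :
    ∑ s ∈ range (w + 1), (w.choose s : ℝ) *
        (if 1 ≤ s ∧ s ≤ n then
          ∑ k ∈ range (w - s + 1), ((w - s).choose k : ℝ) *
            (if k ≤ n - s then (bernoulli k : ℝ) / ((w - s - k : ℕ) + 1) else 0)
        else 0) = 1 := by
  have h := congrArg (fun q : ℚ => (q : ℝ)) (key_identity w n hw hn)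
  simp only [Rat.cast_sum, Rat.cast_mul, apply_ite (fun q : ℚ => (q : ℝ)), Rat.cast_zero,
    Rat.cast_div, Rat.cast_add, Rat.cast_natCast, Rat.cast_one] at h
  exact h

section Main

variable {d : ℕ} (v : (Fin d → ℝ) → Finset (Fin d) → ℝ) (x : Fin d → ℝ)

/-- The Möbius transform (Harsanyi dividends) of the value function. -/
noncomputable def mob (W : Finset (Fin d)) : ℝ :=
  ∑ L ∈ W.powerset, (-1 : ℝ) ^ (W.card - L.card) * v x L

lemma mob_empty : mob v x ∅ = v x ∅ := by
  simp [mob]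

lemma mob_inv (U : Finset (Fin d)) : ∑ W ∈ U.powerset, mob v x W = v x U := by
  unfold mob
  rw [swap_powerset]
  have h1 : ∀ L ∈ U.powerset,
      ∑ W ∈ U.powerset.filter (fun W => L ⊆ W), (-1 : ℝ) ^ (W.card - L.card) * v x L
        = (if U = L then 1 else 0) * v x L := by
    intro L hL
    rw [← Finset.sum_mul, sum_alt_interval (mem_powerset.mp hL)]
  rw [Finset.sum_congr rfl h1]
  simp only [ite_mul, one_mul, zero_mul]
  rw [Finset.sum_ite_eq U.powerset U (fun L => v x L)]
  simp

lemma delta_inner (S T : Finset (Fin d)) (hST : Disjoint S T) :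
    ∑ L ∈ S.powerset, (-1 : ℝ) ^ (S.card - L.card) * v x (L ∪ T)
      = ∑ R ∈ T.powerset, mob v x (S ∪ R) := by
  unfold mob
  have h1 : ∀ R ∈ T.powerset,
      ∑ L ∈ (S ∪ R).powerset, (-1 : ℝ) ^ ((S ∪ R).card - L.card) * v x L
        = ∑ P ∈ S.powerset, ∑ Q ∈ R.powerset,
            ((-1 : ℝ) ^ (S.card - P.card) * ((-1 : ℝ) ^ (R.card - Q.card) * v x (P ∪ Q))) := by
    intro R hR
    rw [mem_powerset] at hR
    have hSR : Disjoint S R := hST.mono_right hR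
    rw [sum_powerset_disjUnion hSR]
    refine Finset.sum_congr rfl fun P hP => Finset.sum_congr rfl fun Q hQ => ?_
    rw [mem_powerset] at hP hQ
    have hPQ : (P ∪ Q).card = P.card + Q.card :=
      card_union_of_disjoint ((hSR.mono_left hP).mono_right hQ)
    have hSRc : (S ∪ R).card = S.card + R.card := card_union_of_disjoint hSR
    have he : (S ∪ R).card - (P ∪ Q).card = (S.card - P.card) + (R.card - Q.card) := by
      have := card_le_card hP
      have := card_le_card hQ
      omega
    rw [he, pow_add]
    ring
  rw [Finset.sum_congr rfl h1]
  rw [Finset.sum_comm]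
  have h2 : ∀ P ∈ S.powerset,
      ∑ R ∈ T.powerset, ∑ Q ∈ R.powerset,
          ((-1 : ℝ) ^ (S.card - P.card) * ((-1 : ℝ) ^ (R.card - Q.card) * v x (P ∪ Q)))
        = (-1 : ℝ) ^ (S.card - P.card) * v x (P ∪ T) := by
    intro P hP
    rw [swap_powerset T (fun R Q => (-1 : ℝ) ^ (S.card - P.card) * ((-1 : ℝ) ^ (R.card - Q.card) * v x (P ∪ Q)))]
    have h3 : ∀ Q ∈ T.powerset,
        ∑ R ∈ T.powerset.filter (fun R => Q ⊆ R),
            ((-1 : ℝ) ^ (S.card - P.card) * ((-1 : ℝ) ^ (R.card - Q.card) * v x (P ∪ Q)))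
          = (if T = Q then 1 else 0) * ((-1 : ℝ) ^ (S.card - P.card) * v x (P ∪ Q)) := by
      intro Q hQ
      have : ∀ R ∈ T.powerset.filter (fun R => Q ⊆ R),
          (-1 : ℝ) ^ (S.card - P.card) * ((-1 : ℝ) ^ (R.card - Q.card) * v x (P ∪ Q))
            = (-1 : ℝ) ^ (R.card - Q.card) * ((-1 : ℝ) ^ (S.card - P.card) * v x (P ∪ Q)) := by
        intro R _; ring
      rw [Finset.sum_congr rfl this, ← Finset.sum_mul, sum_alt_interval (mem_powerset.mp hQ)]
    rw [Finset.sum_congr rfl h3]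
    simp only [ite_mul, one_mul, zero_mul]
    rw [Finset.sum_ite_eq T.powerset T (fun Q => (-1 : ℝ) ^ (S.card - P.card) * v x (P ∪ Q))]
    simp
  rw [Finset.sum_congr rfl h2]

lemma delta_eq (S : Finset (Fin d)) :
    deltaContribution d v x S
      = ∑ R ∈ Sᶜ.powerset, mob v x (S ∪ R) * (1 / ((R.card : ℝ) + 1)) := by
  unfold deltaContribution
  have hM : Sᶜ.card = d - S.card := by
    rw [card_compl, Fintype.card_fin]
  set M := Sᶜ.card with hMdef
  have h1 : ∀ T ∈ Sᶜ.powerset,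
      (((d - T.card - S.card).factorial * T.card.factorial : ℕ) : ℝ) /
          (((d - S.card + 1).factorial : ℕ) : ℝ) *
        ∑ L ∈ S.powerset, (-1 : ℝ) ^ (S.card - L.card) * v x (L ∪ T)
      = ∑ R ∈ T.powerset,
          (((d - T.card - S.card).factorial * T.card.factorial : ℕ) : ℝ) /
            (((d - S.card + 1).factorial : ℕ) : ℝ) * mob v x (S ∪ R) := by
    intro T hT
    rw [mem_powerset] at hT
    rw [delta_inner v x S T (disjoint_compl_right.mono_right hT), Finset.mul_sum]
  rw [Finset.sum_congr rfl h1]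
  rw [swap_powerset Sᶜ (fun T R =>
    (((d - T.card - S.card).factorial * T.card.factorial : ℕ) : ℝ) /
      (((d - S.card + 1).factorial : ℕ) : ℝ) * mob v x (S ∪ R))]
  refine Finset.sum_congr rfl fun R hR => ?_
  rw [mem_powerset] at hR
  rw [sum_supersets hR (fun T =>
    (((d - T.card - S.card).factorial * T.card.factorial : ℕ) : ℝ) /
      (((d - S.card + 1).factorial : ℕ) : ℝ) * mob v x (S ∪ R))]
  have h2 : ∀ T' ∈ (Sᶜ \ R).powerset,
      (((d - (R ∪ T').card - S.card).factorial * (R ∪ T').card.factorial : ℕ) : ℝ) /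
          (((d - S.card + 1).factorial : ℕ) : ℝ) * mob v x (S ∪ R)
      = (fun j => (((M - (R.card + j)).factorial * (R.card + j).factorial : ℕ) : ℝ) /
          (((M + 1).factorial : ℕ) : ℝ) * mob v x (S ∪ R)) T'.card := by
    intro T' hT'
    rw [mem_powerset] at hT'
    have hdisj : Disjoint R T' := disjoint_sdiff.mono_right hT'
    have hcard : (R ∪ T').card = R.card + T'.card := card_union_of_disjoint hdisj
    have hle : R.card + T'.card ≤ M := by
      have h3 : (R ∪ T').card ≤ Sᶜ.card :=
        card_le_card (union_subset hR (hT'.trans sdiff_subset))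
      omega
    have hsc : S.card ≤ d := by
      have := card_le_card (subset_univ S)
      simpa using this
    have e1 : d - (R.card + T'.card) - S.card = M - (R.card + T'.card) := by omega
    have e2 : d - S.card + 1 = M + 1 := by omega
    simp only [hcard, e1, e2]
  rw [Finset.sum_congr rfl h2, Finset.sum_powerset_apply_card
    (fun j => (((M - (R.card + j)).factorial * (R.card + j).factorial : ℕ) : ℝ) /
      (((M + 1).factorial : ℕ) : ℝ) * mob v x (S ∪ R)) (x := Sᶜ \ R)]
  have hcardsd : (Sᶜ \ R).card = M - R.card := card_sdiff_of_subset hR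
  have hrM : R.card ≤ M := card_le_card hR
  rw [hcardsd]
  have h4 : ∑ j ∈ range (M - R.card + 1), (M - R.card).choose j •
        ((((M - (R.card + j)).factorial * (R.card + j).factorial : ℕ) : ℝ) /
          (((M + 1).factorial : ℕ) : ℝ) * mob v x (S ∪ R))
      = (∑ j ∈ range (M - R.card + 1), ((M - R.card).choose j : ℝ) *
          (((M - (R.card + j)).factorial * (R.card + j).factorial : ℕ) : ℝ) /
            (((M + 1).factorial : ℕ) : ℝ)) * mob v x (S ∪ R) := by
    rw [Finset.sum_mul]
    refine Finset.sum_congr rfl fun j _ => ?_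
    rw [nsmul_eq_mul]
    ring
  rw [h4, weight_real M R.card hrM]
  ring

lemma nShapley_eq (n : ℕ) (S : Finset (Fin d)) :
    nShapley d v n x S = ∑ W ∈ (univ : Finset (Fin d)).powerset,
      (if S ⊆ W then mob v x W *
        ∑ K ∈ (W \ S).powerset,
          (if K.card ≤ n - S.card then
            (bernoulli K.card : ℝ) / ((((W \ S).card - K.card : ℕ) : ℝ) + 1) else 0)
      else 0) := by
  have step1 : nShapley d v n x S = ∑ K ∈ Sᶜ.powerset.filter (fun K => K.card ≤ n - S.card),
      (bernoulli K.card : ℝ) * deltaContribution d v x (S ∪ K) := by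
    unfold nShapley
    rw [← Finset.sum_fiberwise_of_maps_to (g := Finset.card) (t := range (n - S.card + 1))
      (fun K hK => by rw [mem_filter] at hK; rw [mem_range]; omega)
      (fun K => (bernoulli K.card : ℝ) * deltaContribution d v x (S ∪ K))]
    refine Finset.sum_congr rfl fun k hk => ?_
    rw [mem_range] at hk
    have hfe : (Sᶜ.powerset.filter (fun K => K.card ≤ n - S.card)).filter (fun K => K.card = k)
        = Sᶜ.powerset.filter (fun K => K.card = k) := by
      ext K
      simp only [Finset.filter_filter, mem_filter, mem_powerset]
      constructor
      · exact fun h => ⟨h.1, h.2.2⟩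
      · exact fun h => ⟨h.1, by omega, h.2⟩
    rw [hfe]
    exact Finset.sum_congr rfl fun K hK => by rw [(mem_filter.mp hK).2]
  have step2 : ∀ K : Finset (Fin d), K ⊆ Sᶜ → deltaContribution d v x (S ∪ K)
      = ∑ W ∈ (univ : Finset (Fin d)).powerset.filter (fun W => S ∪ K ⊆ W),
          mob v x W * (1 / (((W \ (S ∪ K)).card : ℝ) + 1)) := by
    intro K hK
    rw [delta_eq, sum_supersets (subset_univ (S ∪ K))
      (fun W => mob v x W * (1 / (((W \ (S ∪ K)).card : ℝ) + 1)))]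
    have he : (univ : Finset (Fin d)) \ (S ∪ K) = (S ∪ K)ᶜ := (Finset.compl_eq_univ_sdiff _).symm
    rw [he]
    refine Finset.sum_congr rfl fun R hR => ?_
    rw [mem_powerset] at hR
    rw [union_sdiff_cancel_left (disjoint_compl_right.mono_right hR)]
  rw [step1, Finset.sum_filter]
  have step3 : ∀ K ∈ Sᶜ.powerset,
      (if K.card ≤ n - S.card then (bernoulli K.card : ℝ) * deltaContribution d v x (S ∪ K) else 0)
        = ∑ W ∈ (univ : Finset (Fin d)).powerset,
            (if K.card ≤ n - S.card ∧ S ∪ K ⊆ W then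
              (bernoulli K.card : ℝ) * (mob v x W * (1 / (((W \ (S ∪ K)).card : ℝ) + 1))) else 0) := by
    intro K hK
    rw [mem_powerset] at hK
    by_cases h : K.card ≤ n - S.card
    · rw [if_pos h, step2 K hK, Finset.mul_sum, Finset.sum_filter]
      refine Finset.sum_congr rfl fun W _ => ?_
      by_cases h2 : S ∪ K ⊆ W
      · rw [if_pos h2, if_pos ⟨h, h2⟩]
      · rw [if_neg h2, if_neg (fun hc => h2 hc.2)]
    · rw [if_neg h]
      exact (Finset.sum_eq_zero fun W _ => if_neg (fun hc => h hc.1)).symm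
  rw [Finset.sum_congr rfl step3, Finset.sum_comm]
  refine Finset.sum_congr rfl fun W _ => ?_
  by_cases hSW : S ⊆ W
  · rw [if_pos hSW, Finset.mul_sum]
    have hsub : (W \ S).powerset ⊆ Sᶜ.powerset := by
      intro K hKmem
      rw [mem_powerset] at hKmem ⊢
      refine hKmem.trans fun a ha => ?_
      rw [mem_sdiff] at ha
      rw [mem_compl]
      exact ha.2
    rw [← Finset.sum_subset hsub (fun K _ hKnot => ?_)]
    · refine Finset.sum_congr rfl fun K hKmem => ?_
      rw [mem_powerset] at hKmem
      have hKW : S ∪ K ⊆ W := union_subset hSW (hKmem.trans sdiff_subset)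
      have hcd : W \ (S ∪ K) = (W \ S) \ K := by
        rw [sdiff_sdiff]
        rfl
      have hcard : ((W \ S) \ K).card = (W \ S).card - K.card := card_sdiff_of_subset hKmem
      by_cases h : K.card ≤ n - S.card
      · rw [if_pos ⟨h, hKW⟩, if_pos h, hcd, hcard]
        ring
      · rw [if_neg (fun hc => h hc.1), if_neg h, mul_zero]
    · by_cases h : K.card ≤ n - S.card ∧ S ∪ K ⊆ W
      · exfalso
        apply hKnot
        rw [mem_powerset]
        intro a ha
        rw [mem_sdiff]
        have haK : a ∈ Sᶜ := by
          have hKc : K ⊆ Sᶜ := mem_powerset.mp ‹K ∈ Sᶜ.powerset›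
          exact hKc ha
        rw [mem_compl] at haK
        exact ⟨h.2 (mem_union_right S ha), haK⟩
      · exact if_neg h
  · rw [if_neg hSW]
    refine Finset.sum_eq_zero fun K _ => if_neg (fun hc => hSW ?_)
    exact fun a ha => hc.2 (mem_union_left K ha)

end Main

/-- Efficiency of `n`-Shapley Values: for every value function `v`, point `x` and
`1 ≤ n ≤ d`, `∑_{S ⊆ [d], 1 ≤ |S| ≤ n} Φ^n_S(x) = v(x,[d]) - v(x,∅)`. -/
theorem nShapley_efficiency (d : ℕ) (hd : 1 ≤ d)
    (v : (Fin d → ℝ) → Finset (Fin d) → ℝ) (x : Fin d → ℝ)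
    (n : ℕ) (hn : 1 ≤ n) (hnd : n ≤ d) :
    ∑ S ∈ Finset.univ.filter (fun S : Finset (Fin d) => 1 ≤ S.card ∧ S.card ≤ n),
        nShapley d v n x S =
      v x Finset.univ - v x ∅ := by
  rw [Finset.sum_congr rfl (fun S _ => nShapley_eq v x n S)]
  rw [Finset.sum_comm]
  have hW : ∀ W ∈ (univ : Finset (Fin d)).powerset,
      ∑ S ∈ Finset.univ.filter (fun S : Finset (Fin d) => 1 ≤ S.card ∧ S.card ≤ n),
          (if S ⊆ W then mob v x W *
            ∑ K ∈ (W \ S).powerset,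
              (if K.card ≤ n - S.card then
                (bernoulli K.card : ℝ) / ((((W \ S).card - K.card : ℕ) : ℝ) + 1) else 0)
          else 0)
        = mob v x W * (if W = ∅ then 0 else 1) := by
    intro W _
    by_cases hWe : W = ∅
    · rw [if_pos hWe, mul_zero]
      refine Finset.sum_eq_zero fun S hS => ?_
      rw [mem_filter] at hS
      refine if_neg fun hc => ?_
      have hSe : S = ∅ := subset_empty.mp (hWe ▸ hc)
      rw [hSe] at hS
      simp at hS
    · rw [if_neg hWe, mul_one]
      have hw1 : 1 ≤ W.card := card_pos.mpr (nonempty_iff_ne_empty.mpr hWe)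
      set w := W.card with hwdef
      set G : ℕ → ℝ := fun s => if 1 ≤ s ∧ s ≤ n then
          ∑ k ∈ range (w - s + 1), ((w - s).choose k : ℝ) *
            (if k ≤ n - s then (bernoulli k : ℝ) / (((w - s - k : ℕ) : ℝ) + 1) else 0)
        else 0 with hG
      -- restrict the S-sum to W.powerset
      rw [Finset.sum_filter]
      rw [← Finset.sum_subset (Finset.subset_univ W.powerset) (fun S _ hSnot => by
        rw [mem_powerset] at hSnot
        rw [if_neg hSnot, ite_self])]
      -- each term is mob * G S.card
      have h2 : ∀ S ∈ W.powerset,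
          (if 1 ≤ S.card ∧ S.card ≤ n then
            (if S ⊆ W then mob v x W *
              ∑ K ∈ (W \ S).powerset,
                (if K.card ≤ n - S.card then
                  (bernoulli K.card : ℝ) / ((((W \ S).card - K.card : ℕ) : ℝ) + 1) else 0)
            else 0) else 0)
          = mob v x W * G S.card := by
        intro S hSmem
        rw [mem_powerset] at hSmem
        have hws : (W \ S).card = w - S.card := card_sdiff_of_subset hSmem
        rw [if_pos hSmem]
        simp only [hG]
        by_cases hp : 1 ≤ S.card ∧ S.card ≤ n
        · rw [if_pos hp, if_pos hp]
          congr 1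
          set F : ℕ → ℝ := fun k => if k ≤ n - S.card then
              (bernoulli k : ℝ) / ((((W \ S).card - k : ℕ) : ℝ) + 1) else 0 with hF
          calc ∑ K ∈ (W \ S).powerset,
                (if K.card ≤ n - S.card then
                  (bernoulli K.card : ℝ) / ((((W \ S).card - K.card : ℕ) : ℝ) + 1) else 0)
              = ∑ K ∈ (W \ S).powerset, F K.card :=
                Finset.sum_congr rfl fun K _ => by simp only [hF]
            _ = ∑ k ∈ range ((W \ S).card + 1), (W \ S).card.choose k • F k :=
                Finset.sum_powerset_apply_card F
            _ = ∑ k ∈ range (w - S.card + 1), ((w - S.card).choose k : ℝ) *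
                  (if k ≤ n - S.card then
                    (bernoulli k : ℝ) / (((w - S.card - k : ℕ) : ℝ) + 1) else 0) := by
                rw [hws]
                exact Finset.sum_congr rfl fun k _ => by
                  simp only [hF, hws, nsmul_eq_mul]
        · rw [if_neg hp, if_neg hp, mul_zero]
      rw [Finset.sum_congr rfl h2, ← Finset.mul_sum]
      rw [Finset.sum_powerset_apply_card G (x := W)]
      have h3 : ∑ s ∈ range (w + 1), w.choose s • G s = 1 := by
        refine Eq.trans (Finset.sum_congr rfl fun s _ => ?_)
          (key_identity_real w n hw1 hn)
        simp only [hG, nsmul_eq_mul]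
      rw [h3, mul_one]
  rw [Finset.sum_congr rfl hW]
  have h4 : ∀ W ∈ (univ : Finset (Fin d)).powerset,
      mob v x W * (if W = ∅ then 0 else 1)
        = mob v x W - (if W = ∅ then mob v x W else 0) := by
    intro W _
    by_cases hWe : W = ∅ <;> simp [hWe]
  rw [Finset.sum_congr rfl h4, Finset.sum_sub_distrib, mob_inv]
  congr 1
  rw [Finset.sum_ite_eq' ((univ : Finset (Fin d)).powerset) ∅ (fun W => mob v x W)]
  rw [if_pos (Finset.empty_mem_powerset _), mob_empty]
end

section
/- Shapley Values from the Shapley-GAM: for every value function v, every x ∈ ℝ^d and every feature i ∈ [d], the Shapley Value Φ^1_{{i}}(x) equals ∑_{S ⊆ [d], i ∈ S} f_S(x)/|S|, where f_S(x) = ∑_{L ⊆ S} (−1)^{|S|−|L|} · v(x, L) are the Shapley-GAM component functions of v; i.e., each higher-order component is distributed evenly onto the features it involves. -/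
open Finset

lemma key_sum (m : ℕ) : ∀ a : ℕ, 1 ≤ a →
    ∑ j ∈ Finset.range (m+1), (-1:ℝ)^j * (m.choose j) / (a+j)
      = ((a-1).factorial : ℝ) * (m.factorial : ℝ) / ((a+m).factorial : ℝ) := by
  induction m with
  | zero =>
    intro a ha
    rw [Finset.sum_range_one]
    obtain ⟨b, rfl⟩ := Nat.exists_eq_add_of_le ha
    rw [show 1+b-1 = b from by omega, Nat.factorial_zero, add_zero]
    have hf : ((1+b).factorial : ℝ) = (1+b) * (b.factorial : ℝ) := by
      rw [show 1 + b = b + 1 by ring, Nat.factorial_succ]; push_cast; ring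
    rw [hf]
    have : ((b.factorial : ℝ)) > 0 := by positivity
    have : ((1:ℝ) + b) > 0 := by positivity
    push_cast
    field_simp
    simp
  | succ m ih =>
    intro a ha
    have peel : ∑ j ∈ Finset.range (m+2), (-1:ℝ)^j * ((m+1).choose j) / (a+j)
        = ∑ j ∈ Finset.range (m+1), (-1:ℝ)^(j+1) * ((m+1).choose (j+1)) / (a+(j+1)) + 1/a := by
      rw [Finset.sum_range_succ']
      simp
    have peel2 : ∑ j ∈ Finset.range (m+1), (-1:ℝ)^j * (m.choose j) / (a+j)
        = ∑ j ∈ Finset.range m, (-1:ℝ)^(j+1) * (m.choose (j+1)) / (a+(j+1)) + 1/a := by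
      rw [Finset.sum_range_succ']
      simp
    have hstep : ∑ j ∈ Finset.range (m+2), (-1:ℝ)^j * ((m+1).choose j) / (a+j)
        = ∑ j ∈ Finset.range (m+1), (-1:ℝ)^j * (m.choose j) / (a+j)
          - ∑ j ∈ Finset.range (m+1), (-1:ℝ)^j * (m.choose j) / ((a+1)+j) := by
      rw [peel, peel2]
      have e1 : ∀ j ∈ Finset.range (m+1), (-1:ℝ)^(j+1) * ((m+1).choose (j+1)) / (a+(j+1))
          = (-1:ℝ)^(j+1) * (m.choose j) / (a+(j+1)) + (-1:ℝ)^(j+1) * (m.choose (j+1)) / (a+(j+1)) := by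
        intro j _
        rw [Nat.choose_succ_succ]
        push_cast
        ring
      rw [Finset.sum_congr rfl e1, Finset.sum_add_distrib]
      have e2 : ∑ j ∈ Finset.range (m+1), (-1:ℝ)^(j+1) * (m.choose (j+1)) / (a+(j+1))
          = ∑ j ∈ Finset.range m, (-1:ℝ)^(j+1) * (m.choose (j+1)) / (a+(j+1)) := by
        rw [Finset.sum_range_succ]
        simp
      have e3 : ∑ j ∈ Finset.range (m+1), (-1:ℝ)^(j+1) * (m.choose j) / (a+(j+1))
          = - ∑ j ∈ Finset.range (m+1), (-1:ℝ)^j * (m.choose j) / ((a+1)+j) := by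
        rw [← Finset.sum_neg_distrib]
        refine Finset.sum_congr rfl fun j _ => ?_
        push_cast
        ring_nf
      rw [e2, e3]
      ring
    have ih' := ih (a+1) (by omega)
    push_cast at ih'
    rw [hstep, ih a ha, ih']
    push_cast
    obtain ⟨b, rfl⟩ := Nat.exists_eq_add_of_le ha
    have h1 : (1 + b - 1) = b := by omega
    have h2 : (1 + b + 1 - 1) = b + 1 := by omega
    rw [h1, h2] at *
    have hf1 : ((1 + b + (m+1)).factorial : ℝ) = (1 + b + (m+1)) * ((1+b+m).factorial : ℝ) := by
      rw [show 1 + b + (m+1) = (1+b+m) + 1 by ring, Nat.factorial_succ]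
      push_cast; ring
    have hf2 : ((1 + b + 1 + m).factorial : ℝ) = (1 + b + (m+1)) * ((1+b+m).factorial : ℝ) := by
      rw [show 1 + b + 1 + m = (1+b+m) + 1 by ring, Nat.factorial_succ]
      push_cast; ring
    have hf3 : ((1+b).factorial : ℝ) = ((b:ℝ)+1) * (b.factorial : ℝ) := by
      rw [show 1+b = b+1 by ring, Nat.factorial_succ]; push_cast; ring
    have hf4 : ((m+1).factorial : ℝ) = (m+1) * (m.factorial : ℝ) := by
      rw [Nat.factorial_succ]; push_cast; ring
    rw [hf1, hf2, hf3, hf4]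
    have p1 : ((1+b+m).factorial : ℝ) > 0 := by positivity
    have p2 : ( (1:ℝ) + b + (m+1)) > 0 := by positivity
    field_simp
    ring


lemma sum_filter_superset {d : ℕ} (B : Finset (Fin d)) (f : ℕ → ℝ) :
    ∑ S ∈ Finset.univ.filter (fun S => B ⊆ S), f S.card
      = ∑ j ∈ Finset.range ((d - B.card) + 1), ((d - B.card).choose j : ℝ) * f (B.card + j) := by
  have h1 : ∑ S ∈ Finset.univ.filter (fun S => B ⊆ S), f S.card
      = ∑ T ∈ Bᶜ.powerset, f (B.card + T.card) := by
    refine Finset.sum_nbij' (fun S => S \ B) (fun T => B ∪ T) ?_ ?_ ?_ ?_ ?_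
    · intro S hS
      simp only [Finset.mem_filter, Finset.mem_univ, true_and] at hS
      simp only [Finset.mem_powerset]
      intro a ha
      simp only [Finset.mem_sdiff] at ha
      simp [ha.2]
    · intro T hT
      simp
    · intro S hS
      simp only [Finset.mem_filter, Finset.mem_univ, true_and] at hS
      exact Finset.union_sdiff_of_subset hS
    · intro T hT
      simp only [Finset.mem_powerset] at hT
      show (B ∪ T) \ B = T
      rw [Finset.union_sdiff_cancel_left]
      rw [Finset.disjoint_left]
      intro a haB haT
      have := hT haT
      simp at this
      exact this haB
    · intro S hS
      simp only [Finset.mem_filter, Finset.mem_univ, true_and] at hS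
      rw [Finset.card_sdiff_of_subset hS]
      congr 1
      have := Finset.card_le_card hS
      omega
  rw [h1, Finset.sum_powerset_apply_card (fun n => f (B.card + n))]
  refine Finset.sum_congr ?_ fun j _ => ?_
  · rw [Finset.card_compl, Fintype.card_fin]
  · rw [Finset.card_compl, Fintype.card_fin, nsmul_eq_mul]

lemma coeff_eq {d : ℕ} (i : Fin d) (L : Finset (Fin d)) :
    ∑ S ∈ Finset.univ.filter (fun S => i ∈ S ∧ L ⊆ S), (-1:ℝ)^(S.card - L.card) / (S.card : ℝ)
      = if i ∈ L then (((d - L.card).factorial * (L.card - 1).factorial : ℕ) : ℝ) / ((d.factorial : ℕ) : ℝ)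
        else -((((d - L.card - 1).factorial * L.card.factorial : ℕ) : ℝ) / ((d.factorial : ℕ) : ℝ)) := by
  have hfil : Finset.univ.filter (fun S : Finset (Fin d) => i ∈ S ∧ L ⊆ S)
      = Finset.univ.filter (fun S => insert i L ⊆ S) := by
    apply Finset.filter_congr
    intro S _
    simp [Finset.insert_subset_iff]
  rw [hfil, sum_filter_superset (insert i L) (fun n => (-1:ℝ)^(n - L.card) / (n : ℝ))]
  by_cases hi : i ∈ L
  · rw [if_pos hi, Finset.insert_eq_self.mpr hi]
    have hl1 : 1 ≤ L.card := Finset.card_pos.mpr ⟨i, hi⟩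
    have hld : L.card ≤ d := by
      simpa using Finset.card_le_card (Finset.subset_univ L)
    have := key_sum (d - L.card) L.card hl1
    rw [show L.card + (d - L.card) = d from by omega] at this
    have e : ∑ j ∈ Finset.range (d - L.card + 1),
        ((d - L.card).choose j : ℝ) * ((-1:ℝ)^(L.card + j - L.card) / ((L.card + j : ℕ) : ℝ))
        = ∑ j ∈ Finset.range (d - L.card + 1),
            (-1:ℝ)^j * ((d - L.card).choose j : ℝ) / ((L.card : ℝ) + j) := by
      refine Finset.sum_congr rfl fun j _ => ?_
      rw [show L.card + j - L.card = j from by omega]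
      push_cast
      ring
    rw [e, this]
    push_cast
    ring
  · rw [if_neg hi, Finset.card_insert_of_notMem hi]
    have hld : L.card + 1 ≤ d := by
      have := Finset.card_le_card (Finset.subset_univ (insert i L))
      rwa [Finset.card_insert_of_notMem hi, Finset.card_univ, Fintype.card_fin] at this
    have hk := key_sum (d - (L.card + 1)) (L.card + 1) (by omega)
    rw [show (L.card + 1) + (d - (L.card + 1)) = d from by omega,
      show L.card + 1 - 1 = L.card from by omega] at hk
    have : ∑ j ∈ Finset.range (d - (L.card + 1) + 1),
        ((d - (L.card + 1)).choose j : ℝ) * ((-1:ℝ)^((L.card + 1) + j - L.card) / ((L.card + 1 + j : ℕ) : ℝ))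
        = - ∑ j ∈ Finset.range (d - (L.card+1) + 1),
            (-1:ℝ)^j * ((d - (L.card+1)).choose j : ℝ) / (((L.card+1 : ℕ) : ℝ) + j) := by
      rw [← Finset.sum_neg_distrib]
      refine Finset.sum_congr rfl fun j _ => ?_
      rw [show (L.card + 1) + j - L.card = j + 1 from by omega, pow_succ]
      push_cast
      ring
    rw [this, hk, show d - (L.card + 1) = d - L.card - 1 from by omega]
    push_cast
    ring

/-- Shapley Values from the Shapley-GAM: for every value function `v`, point `x`
and feature `i ∈ [d]`, the Shapley Value `Φ^1_{{i}}(x)` equals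
`∑_{S ⊆ [d], i ∈ S} f_S(x)/|S|`, where `f_S(x) = ∑_{L ⊆ S} (-1)^{|S|-|L|} · v(x,L)`
are the Shapley-GAM component functions of `v`. -/
theorem shapley_from_shapley_gam (d : ℕ) (hd : 1 ≤ d)
    (v : (Fin d → ℝ) → Finset (Fin d) → ℝ) (x : Fin d → ℝ) (i : Fin d) :
    nShapley d v 1 x {i} =
      ∑ S ∈ Finset.univ.filter (fun S : Finset (Fin d) => i ∈ S),
        (∑ L ∈ S.powerset, (-1 : ℝ) ^ (S.card - L.card) * v x L) / (S.card : ℝ) := by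
  -- abbreviations
  set P : Finset (Finset (Fin d)) := ({i} : Finset (Fin d))ᶜ.powerset with hP
  have hPmem : ∀ T : Finset (Fin d), T ∈ P ↔ i ∉ T := by
    intro T
    simp only [hP, Finset.mem_powerset]
    constructor
    · intro h hiT
      have := h hiT
      simp at this
    · intro h a ha
      simp only [Finset.mem_compl, Finset.mem_singleton]
      rintro rfl
      exact h ha
  -- Step A: reduce nShapley
  have stepA : nShapley d v 1 x {i} = deltaContribution d v x {i} := by
    unfold nShapley
    rw [Finset.card_singleton]
    norm_num
    have : (({i} : Finset (Fin d))ᶜ.powerset.filter (fun K => K = ∅)) = {∅} := by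
      ext K
      simp only [Finset.mem_filter, Finset.mem_singleton, Finset.mem_powerset]
      constructor
      · rintro ⟨_, h⟩; exact h
      · rintro rfl
        refine ⟨fun a ha => absurd ha (by simp), rfl⟩
    rw [this]
    simp
  rw [stepA]
  -- Step B: expand delta
  have w_def : ∀ T : Finset (Fin d), True := fun _ => trivial
  have stepB : deltaContribution d v x {i} =
      ∑ T ∈ P, ((((d - T.card - 1).factorial * T.card.factorial : ℕ) : ℝ) / ((d.factorial : ℕ) : ℝ))
        * (v x (insert i T) - v x T) := by
    unfold deltaContribution
    refine Finset.sum_congr rfl fun T hT => ?_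
    rw [Finset.card_singleton, show d - 1 + 1 = d from by omega]
    congr 1
    have hpow : ({i} : Finset (Fin d)).powerset = {∅, {i}} := by
      ext L
      simp [Finset.subset_singleton_iff]
    rw [hpow, Finset.sum_pair (Ne.symm (Finset.singleton_ne_empty i))]
    simp only [Finset.card_empty, Finset.card_singleton, Finset.empty_union, Finset.singleton_union, Nat.sub_zero, Nat.sub_self, pow_one, pow_zero]
    ring
  rw [stepB]
  -- Step C: split LHS
  have stepC : ∑ T ∈ P, ((((d - T.card - 1).factorial * T.card.factorial : ℕ) : ℝ) / ((d.factorial : ℕ) : ℝ))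
        * (v x (insert i T) - v x T)
      = (∑ T ∈ P, ((((d - T.card - 1).factorial * T.card.factorial : ℕ) : ℝ) / ((d.factorial : ℕ) : ℝ)) * v x (insert i T))
        - ∑ T ∈ P, ((((d - T.card - 1).factorial * T.card.factorial : ℕ) : ℝ) / ((d.factorial : ℕ) : ℝ)) * v x T := by
    rw [← Finset.sum_sub_distrib]
    refine Finset.sum_congr rfl fun T hT => ?_
    ring
  rw [stepC]
  -- Step D: rewrite RHS as sum over all L with coefficient
  have stepD : ∑ S ∈ Finset.univ.filter (fun S : Finset (Fin d) => i ∈ S),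
        (∑ L ∈ S.powerset, (-1 : ℝ) ^ (S.card - L.card) * v x L) / (S.card : ℝ)
      = ∑ L : Finset (Fin d),
          (∑ S ∈ Finset.univ.filter (fun S => i ∈ S ∧ L ⊆ S), (-1:ℝ)^(S.card - L.card) / (S.card : ℝ)) * v x L := by
    rw [Finset.sum_filter]
    have e1 : ∀ S : Finset (Fin d),
        (if i ∈ S then (∑ L ∈ S.powerset, (-1 : ℝ) ^ (S.card - L.card) * v x L) / (S.card : ℝ) else 0)
        = ∑ L : Finset (Fin d), (if i ∈ S ∧ L ⊆ S then ((-1:ℝ)^(S.card - L.card) / (S.card : ℝ)) * v x L else 0) := by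
      intro S
      by_cases hiS : i ∈ S
      · simp only [hiS, true_and, if_true]
        rw [Finset.sum_div]
        have : S.powerset = Finset.univ.filter (fun L => L ⊆ S) := by
          ext L; simp
        rw [this, Finset.sum_filter]
        refine Finset.sum_congr rfl fun L _ => ?_
        by_cases h : L ⊆ S
        · rw [if_pos h, if_pos h]; ring
        · rw [if_neg h, if_neg h]
      · simp [hiS]
    rw [Finset.sum_congr rfl (fun S _ => e1 S), Finset.sum_comm]
    refine Finset.sum_congr rfl fun L _ => ?_
    rw [Finset.sum_mul, ← Finset.sum_filter]
  rw [stepD]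
  have stepE : ∀ L : Finset (Fin d),
      (∑ S ∈ Finset.univ.filter (fun S => i ∈ S ∧ L ⊆ S), (-1:ℝ)^(S.card - L.card) / (S.card : ℝ)) * v x L
      = (if i ∈ L then (((d - L.card).factorial * (L.card - 1).factorial : ℕ) : ℝ) / ((d.factorial : ℕ) : ℝ)
        else -((((d - L.card - 1).factorial * L.card.factorial : ℕ) : ℝ) / ((d.factorial : ℕ) : ℝ))) * v x L := by
    intro L
    rw [coeff_eq]
  rw [Finset.sum_congr rfl (fun L _ => stepE L)]
  -- split RHS by i ∈ L
  rw [← Finset.sum_filter_add_sum_filter_not Finset.univ (fun L : Finset (Fin d) => i ∈ L)]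
  have eqpos : ∑ L ∈ Finset.univ.filter (fun L : Finset (Fin d) => i ∈ L),
      (if i ∈ L then (((d - L.card).factorial * (L.card - 1).factorial : ℕ) : ℝ) / ((d.factorial : ℕ) : ℝ)
        else -((((d - L.card - 1).factorial * L.card.factorial : ℕ) : ℝ) / ((d.factorial : ℕ) : ℝ))) * v x L
      = ∑ T ∈ P, ((((d - T.card - 1).factorial * T.card.factorial : ℕ) : ℝ) / ((d.factorial : ℕ) : ℝ)) * v x (insert i T) := by
    refine Finset.sum_nbij' (fun L => L.erase i) (fun T => insert i T) ?_ ?_ ?_ ?_ ?_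
    · intro L hL
      simp only [Finset.mem_filter, Finset.mem_univ, true_and] at hL
      rw [hPmem]
      simp
    · intro T hT
      rw [hPmem] at hT
      simp
    · intro L hL
      simp only [Finset.mem_filter, Finset.mem_univ, true_and] at hL
      exact Finset.insert_erase hL
    · intro T hT
      rw [hPmem] at hT
      exact Finset.erase_insert hT
    · intro L hL
      simp only [Finset.mem_filter, Finset.mem_univ, true_and] at hL
      have h1 : 1 ≤ L.card := Finset.card_pos.mpr ⟨i, hL⟩
      rw [if_pos hL, Finset.insert_erase hL, Finset.card_erase_of_mem hL,
        show d - (L.card - 1) - 1 = d - L.card from by omega]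
  have eqneg : ∑ L ∈ Finset.univ.filter (fun L : Finset (Fin d) => ¬ i ∈ L),
      (if i ∈ L then (((d - L.card).factorial * (L.card - 1).factorial : ℕ) : ℝ) / ((d.factorial : ℕ) : ℝ)
        else -((((d - L.card - 1).factorial * L.card.factorial : ℕ) : ℝ) / ((d.factorial : ℕ) : ℝ))) * v x L
      = - ∑ T ∈ P, ((((d - T.card - 1).factorial * T.card.factorial : ℕ) : ℝ) / ((d.factorial : ℕ) : ℝ)) * v x T := by
    have : Finset.univ.filter (fun L : Finset (Fin d) => ¬ i ∈ L) = P := by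
      ext T
      rw [hPmem]
      simp
    rw [this, ← Finset.sum_neg_distrib]
    refine Finset.sum_congr rfl fun T hT => ?_
    rw [hPmem] at hT
    rw [if_neg hT]
    ring
  rw [eqpos, eqneg]
  ring
end

section
/- For every value function v, every x ∈ ℝ^d and every subset S ⊆ [d], Δ_S(x) = ∑_{K ⊆ [d]∖S} f_{S∪K}(x)/(1+|K|), where f_T(x) = ∑_{L ⊆ T} (−1)^{|T|−|L|} · v(x, L) are the Shapley-GAM component functions of v. -/
open Finset


private lemma factR_ne (m : ℕ) : ((m.factorial : ℕ) : ℝ) ≠ 0 := by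
  exact_mod_cast m.factorial_ne_zero

lemma alt_inv_sum (n : ℕ) : ∀ t : ℕ,
    ∑ j ∈ Finset.range (n + 1), (-1 : ℝ) ^ j * (n.choose j : ℝ) / ((t : ℝ) + 1 + (j : ℝ))
      = ((t.factorial : ℝ) * (n.factorial : ℝ)) / (((n + t + 1).factorial : ℕ) : ℝ) := by
  induction n with
  | zero =>
      intro t
      have ht : ((t : ℝ) + 1) ≠ 0 := by positivity
      simp only [Finset.sum_range_one, Nat.choose_self, Nat.cast_one, pow_zero, one_mul,
        Nat.cast_zero, add_zero, Nat.zero_add, Nat.factorial, Nat.factorial_succ]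
      push_cast
      field_simp
  | succ n ih =>
      intro t
      have h0 := Finset.sum_range_succ' (fun j => (-1 : ℝ) ^ j * ((n+1).choose j : ℝ) / ((t : ℝ) + 1 + (j : ℝ))) (n+1)
      rw [h0]
      have h1 : ∀ i ∈ Finset.range (n+1),
          (-1 : ℝ) ^ (i+1) * ((n+1).choose (i+1) : ℝ) / ((t : ℝ) + 1 + ((i+1 : ℕ) : ℝ))
            = -((-1 : ℝ) ^ i * (n.choose i : ℝ) / (((t+1 : ℕ) : ℝ) + 1 + (i : ℝ)))
              + (-1 : ℝ) ^ (i+1) * (n.choose (i+1) : ℝ) / ((t : ℝ) + 1 + ((i+1 : ℕ) : ℝ)) := by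
        intro i _
        rw [Nat.choose_succ_succ']
        push_cast
        ring
      rw [Finset.sum_congr rfl h1, Finset.sum_add_distrib]
      have h2 : ∑ i ∈ Finset.range (n+1),
          -((-1 : ℝ) ^ i * (n.choose i : ℝ) / (((t+1 : ℕ) : ℝ) + 1 + (i : ℝ)))
          = -(((t+1).factorial : ℝ) * (n.factorial : ℝ) / (((n + (t+1) + 1).factorial : ℕ) : ℝ)) := by
        rw [Finset.sum_neg_distrib, ih (t+1)]
      have h3 : (∑ i ∈ Finset.range (n+1),
            (-1 : ℝ) ^ (i+1) * (n.choose (i+1) : ℝ) / ((t : ℝ) + 1 + ((i+1 : ℕ) : ℝ)))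
            + (-1 : ℝ) ^ 0 * ((n+1).choose 0 : ℝ) / ((t : ℝ) + 1 + ((0 : ℕ) : ℝ))
          = ((t.factorial : ℝ) * (n.factorial : ℝ)) / (((n + t + 1).factorial : ℕ) : ℝ) := by
        have h4 := Finset.sum_range_succ' (fun j => (-1 : ℝ) ^ j * (n.choose j : ℝ) / ((t : ℝ) + 1 + (j : ℝ))) (n+1)
        have h5 := Finset.sum_range_succ (fun j => (-1 : ℝ) ^ j * (n.choose j : ℝ) / ((t : ℝ) + 1 + (j : ℝ))) (n+1)
        simp only [Nat.choose_succ_self, Nat.cast_zero, mul_zero, zero_mul, zero_div, mul_zero,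
          add_zero, Nat.cast_zero] at h5
        rw [← ih t, ← h5, h4]
        norm_num
      rw [h2, add_assoc, h3]
      -- goal: -( (t+1)! n! / (n+t+2)! ) + t!n!/(n+t+1)! = t!(n+1)!/((n+1)+t+1)!
      have e1 : (n + 1) + t + 1 = (n + t + 1) + 1 := by omega
      have e2 : n + (t+1) + 1 = (n + t + 1) + 1 := by omega
      rw [e1, e2, Nat.factorial_succ (n + t + 1), Nat.factorial_succ t, Nat.factorial_succ n]
      have hne := factR_ne (n + t + 1)
      push_cast
      field_simp
      ring


lemma coeff_sum {α : Type*} [DecidableEq α] (U T : Finset α) (hT : T ⊆ U) :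
    ∑ K ∈ U.powerset.filter (fun K => T ⊆ K),
        (-1 : ℝ) ^ (K.card - T.card) / (1 + (K.card : ℝ))
      = (((U.card - T.card).factorial * T.card.factorial : ℕ) : ℝ)
          / (((U.card + 1).factorial : ℕ) : ℝ) := by
  have h1 : ∑ K ∈ U.powerset.filter (fun K => T ⊆ K),
        (-1 : ℝ) ^ (K.card - T.card) / (1 + (K.card : ℝ))
      = ∑ J ∈ (U \ T).powerset, (-1 : ℝ) ^ J.card / (1 + ((T.card + J.card : ℕ) : ℝ)) := by
    refine Finset.sum_nbij' (fun K => K \ T) (fun J => T ∪ J) ?_ ?_ ?_ ?_ ?_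
    · intro K hK
      rw [Finset.mem_filter, Finset.mem_powerset] at hK
      exact Finset.mem_powerset.mpr (Finset.sdiff_subset_sdiff hK.1 Finset.Subset.rfl)
    · intro J hJ
      rw [Finset.mem_powerset] at hJ
      rw [Finset.mem_filter, Finset.mem_powerset]
      exact ⟨Finset.union_subset hT (hJ.trans Finset.sdiff_subset), Finset.subset_union_left⟩
    · intro K hK
      rw [Finset.mem_filter] at hK
      exact Finset.union_sdiff_of_subset hK.2
    · intro J hJ
      rw [Finset.mem_powerset] at hJ
      exact Finset.union_sdiff_cancel_left
        (Finset.disjoint_of_subset_right hJ Finset.disjoint_sdiff)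
    · intro K hK
      rw [Finset.mem_filter, Finset.mem_powerset] at hK
      rw [Finset.card_sdiff_of_subset hK.2, Nat.add_sub_cancel' (Finset.card_le_card hK.2)]
  rw [h1, Finset.sum_powerset]
  have h2 : ∀ j ∈ Finset.range ((U \ T).card + 1),
      ∑ J ∈ Finset.powersetCard j (U \ T), (-1 : ℝ) ^ J.card / (1 + ((T.card + J.card : ℕ) : ℝ))
        = (-1 : ℝ) ^ j * (((U \ T).card.choose j : ℕ) : ℝ) / ((T.card : ℝ) + 1 + (j : ℝ)) := by
    intro j _
    have hconst : ∀ J ∈ Finset.powersetCard j (U \ T),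
        (-1 : ℝ) ^ J.card / (1 + ((T.card + J.card : ℕ) : ℝ))
          = (-1 : ℝ) ^ j / (1 + ((T.card + j : ℕ) : ℝ)) := fun J hJ => by
      rw [(Finset.mem_powersetCard.mp hJ).2]
    rw [Finset.sum_congr rfl hconst, Finset.sum_const, Finset.card_powersetCard, nsmul_eq_mul]
    push_cast
    ring
  rw [Finset.sum_congr rfl h2, alt_inv_sum (U \ T).card T.card]
  have e1 : (U \ T).card = U.card - T.card := Finset.card_sdiff_of_subset hT
  have hle := Finset.card_le_card hT
  have e2 : U.card - T.card + T.card + 1 = U.card + 1 := by omega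
  rw [e1, e2]
  push_cast
  ring

/-- For every value function `v`, point `x` and subset `S ⊆ [d]`,
`Δ_S(x) = ∑_{K ⊆ [d]∖S} f_{S∪K}(x)/(1+|K|)`, where
`f_T(x) = ∑_{L ⊆ T} (-1)^{|T|-|L|} · v(x, L)` are the Shapley-GAM component
functions of `v`. -/
theorem delta_from_shapley_gam (d : ℕ) (hd : 1 ≤ d)
    (v : (Fin d → ℝ) → Finset (Fin d) → ℝ) (x : Fin d → ℝ) (S : Finset (Fin d)) :
    deltaContribution d v x S =
      ∑ K ∈ Sᶜ.powerset,
        (∑ L ∈ (S ∪ K).powerset, (-1 : ℝ) ^ ((S ∪ K).card - L.card) * v x L) /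
          (1 + (K.card : ℝ)) := by
  classical
  set g : Finset (Fin d) → ℝ :=
    fun B => ∑ A ∈ S.powerset, (-1 : ℝ) ^ (S.card - A.card) * v x (A ∪ B) with hg
  -- Step A: expand each RHS term as a double sum
  have stepA : ∀ K ∈ Sᶜ.powerset,
      (∑ L ∈ (S ∪ K).powerset, (-1 : ℝ) ^ ((S ∪ K).card - L.card) * v x L) /
          (1 + (K.card : ℝ))
        = ∑ B ∈ K.powerset, (-1 : ℝ) ^ (K.card - B.card) / (1 + (K.card : ℝ)) * g B := by
    intro K hK
    rw [Finset.mem_powerset] at hK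
    have hdisj : Disjoint S K := by
      rw [Finset.disjoint_left]
      intro a haS haK
      exact (Finset.mem_compl.mp (hK haK)) haS
    have hnum : ∑ L ∈ (S ∪ K).powerset, (-1 : ℝ) ^ ((S ∪ K).card - L.card) * v x L
        = ∑ B ∈ K.powerset, (-1 : ℝ) ^ (K.card - B.card) * g B := by
      simp only [hg, Finset.mul_sum]
      have hprod := Finset.sum_product' (s := K.powerset) (t := S.powerset)
        (f := fun B A => (-1 : ℝ) ^ (K.card - B.card)
          * ((-1 : ℝ) ^ (S.card - A.card) * v x (A ∪ B)))
      rw [← hprod]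
      refine Finset.sum_nbij' (fun L => (L ∩ K, L ∩ S)) (fun p => p.2 ∪ p.1) ?_ ?_ ?_ ?_ ?_
      · intro L hL
        rw [Finset.mem_powerset] at hL
        exact Finset.mem_product.mpr ⟨Finset.mem_powerset.mpr Finset.inter_subset_right,
          Finset.mem_powerset.mpr Finset.inter_subset_right⟩
      · intro p hp
        rw [Finset.mem_product, Finset.mem_powerset, Finset.mem_powerset] at hp
        exact Finset.mem_powerset.mpr (Finset.union_subset
          (hp.2.trans Finset.subset_union_left) (hp.1.trans Finset.subset_union_right))
      · intro L hL
        rw [Finset.mem_powerset] at hL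
        show L ∩ S ∪ L ∩ K = L
        rw [← Finset.inter_union_distrib_left]
        exact Finset.inter_eq_left.mpr hL
      · intro p hp
        rw [Finset.mem_product, Finset.mem_powerset, Finset.mem_powerset] at hp
        have h1 : (p.2 ∪ p.1) ∩ K = p.1 := by
          ext a
          simp only [Finset.mem_inter, Finset.mem_union]
          constructor
          · rintro ⟨h | h, hK'⟩
            · exact absurd hK' (Finset.disjoint_left.mp hdisj (hp.2 h))
            · exact h
          · intro h; exact ⟨Or.inr h, hp.1 h⟩
        have h2 : (p.2 ∪ p.1) ∩ S = p.2 := by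
          ext a
          simp only [Finset.mem_inter, Finset.mem_union]
          constructor
          · rintro ⟨h | h, hS'⟩
            · exact h
            · exact absurd hS' (Finset.disjoint_right.mp hdisj (hp.1 h))
          · intro h; exact ⟨Or.inl h, hp.2 h⟩
        exact Prod.ext h1 h2
      · intro L hL
        rw [Finset.mem_powerset] at hL
        have hLS : L ∩ S ⊆ S := Finset.inter_subset_right
        have hLK : L ∩ K ⊆ K := Finset.inter_subset_right
        have hL' : (L ∩ S) ∪ (L ∩ K) = L := by
          rw [← Finset.inter_union_distrib_left]; exact Finset.inter_eq_left.mpr hL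
        have hcardL : L.card = (L ∩ S).card + (L ∩ K).card := by
          conv_lhs => rw [← hL']
          exact Finset.card_union_of_disjoint
            (hdisj.mono Finset.inter_subset_right Finset.inter_subset_right)
        have hcardSK : (S ∪ K).card = S.card + K.card :=
          Finset.card_union_of_disjoint hdisj
        have ha : (L ∩ S).card ≤ S.card := Finset.card_le_card hLS
        have hb : (L ∩ K).card ≤ K.card := Finset.card_le_card hLK
        have hexp : (S ∪ K).card - L.card
            = (K.card - (L ∩ K).card) + (S.card - (L ∩ S).card) := by
          rw [hcardSK, hcardL]; omega
        rw [hexp, pow_add, hL']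
        ring
    rw [hnum, Finset.sum_div]
    exact Finset.sum_congr rfl fun B _ => by ring
  rw [Finset.sum_congr rfl stepA]
  -- Step B: swap the two sums
  have stepB : ∑ K ∈ Sᶜ.powerset, ∑ B ∈ K.powerset,
        (-1 : ℝ) ^ (K.card - B.card) / (1 + (K.card : ℝ)) * g B
      = ∑ T ∈ Sᶜ.powerset, ∑ K ∈ Sᶜ.powerset.filter (fun K => T ⊆ K),
        (-1 : ℝ) ^ (K.card - T.card) / (1 + (K.card : ℝ)) * g T := by
    refine Finset.sum_comm' ?_
    intro K B
    simp only [Finset.mem_powerset, Finset.mem_filter]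
    constructor
    · rintro ⟨h1, h2⟩; exact ⟨⟨h1, h2⟩, h2.trans h1⟩
    · rintro ⟨⟨h1, h2⟩, h3⟩; exact ⟨h1, h2⟩
  rw [stepB]
  -- Step C: evaluate the inner coefficient sums
  rw [deltaContribution]
  refine Finset.sum_congr rfl fun T hT => ?_
  rw [Finset.mem_powerset] at hT
  rw [← Finset.sum_mul, coeff_sum Sᶜ T hT]
  have hUcard : (Sᶜ : Finset (Fin d)).card = d - S.card := by
    rw [Finset.card_compl, Fintype.card_fin]
  have e1 : Sᶜ.card - T.card = d - T.card - S.card := by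
    have h1 := Finset.card_le_card hT
    rw [hUcard] at h1 ⊢
    omega
  rw [e1, hUcard]
end

section
/- Relationship between n-Shapley Values of different orders: for every value function v, every x ∈ ℝ^d, all 1 ≤ m ≤ n ≤ d and every nonempty S ⊆ [d] with |S| ≤ m, Φ^m_S(x) = Φ^n_S(x) + ∑_{K ⊆ [d]∖S with m < |S|+|K| ≤ n} c_{m−|S|,|K|} · Φ^n_{S∪K}(x), where the coefficients are c_{j,ℓ} = ∑_{k=0}^{j} binom(ℓ,k) · B_k/(1+ℓ−k). -/
open Finset

lemma lemA (M : ℕ) :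
    ∑ r ∈ range (M + 1), (M.choose r : ℚ) * bernoulli (M - r) / (1 + r) =
      if M = 0 then 1 else 0 := by
  have h1 : ∀ r ∈ range (M + 1),
      (M.choose r : ℚ) * bernoulli (M - r) / (1 + r) =
        (1 / (M + 1)) * (((M + 1).choose (r + 1) : ℚ) * bernoulli (M - r)) := by
    intro r hr
    have hcast : ((M + 1 : ℕ) : ℚ) * (M.choose r : ℚ) = ((M + 1).choose (r + 1) : ℚ) * (r + 1) := by
      exact_mod_cast congrArg (Nat.cast : ℕ → ℚ) (Nat.add_one_mul_choose_eq M r)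
    have hr1 : (1 + (r : ℚ)) ≠ 0 := by positivity
    have hM1 : ((M : ℚ) + 1) ≠ 0 := by positivity
    have key : (M.choose r : ℚ) / (1 + r) = ((M + 1).choose (r + 1) : ℚ) / (M + 1) := by
      rw [div_eq_div_iff hr1 hM1]
      push_cast at hcast
      linear_combination hcast
    rw [mul_comm (M.choose r : ℚ) (bernoulli (M - r)), mul_div_assoc, key]
    ring
  rw [sum_congr rfl h1, ← mul_sum]
  have h2 : ∑ r ∈ range (M + 1), ((M + 1).choose (r + 1) : ℚ) * bernoulli (M - r) =
      ∑ r ∈ range (M + 1), ((M + 1).choose r : ℚ) * bernoulli r := by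
    rw [← Finset.sum_range_reflect (fun r => ((M + 1).choose r : ℚ) * bernoulli r) (M + 1)]
    refine sum_congr rfl fun r hr => ?_
    have hrM : r ≤ M := by simpa [Nat.lt_succ_iff] using hr
    have hsym : (M + 1).choose (M + 1 - (r + 1)) = (M + 1).choose (r + 1) :=
      Nat.choose_symm (by omega)
    have h3 : M + 1 - 1 - r = M - r := by omega
    have h4 : M + 1 - (r + 1) = M - r := by omega
    simp only [h3]
    rw [← hsym, h4]
  rw [h2, sum_bernoulli]
  rcases Nat.eq_zero_or_pos M with h | h
  · simp [h]
  · rw [if_neg (by omega : ¬ M + 1 = 1), mul_zero, if_neg (by omega : ¬ M = 0)]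

lemma lemB (t : ℕ) (ht : 1 ≤ t) :
    ∑ k ∈ range (t + 1), (t.choose k : ℚ) * bernoulli k / (1 + t - k) = 0 := by
  have h1 : ∀ k ∈ range (t + 1),
      (t.choose k : ℚ) * bernoulli k / (1 + t - k) =
        (1 / (t + 1)) * (((t + 1).choose k : ℚ) * bernoulli k) := by
    intro k hk
    have hkt : k ≤ t := by simpa [Nat.lt_succ_iff] using hk
    have hnat : (t + 1) * t.choose k = (t + 1).choose k * (t - k + 1) := by
      have e1 := Nat.add_one_mul_choose_eq t (t - k)
      rw [] at e1
      have e2 : t.choose (t - k) = t.choose k := Nat.choose_symm hkt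
      have e3 : (t + 1).choose (t - k + 1) = (t + 1).choose k := by
        have h4 := Nat.choose_symm (show k ≤ t + 1 by omega)
        rw [show t + 1 - k = t - k + 1 by omega] at h4
        exact h4
      rw [e2, e3] at e1
      exact e1
    have hcast : ((t : ℚ) + 1) * (t.choose k : ℚ) = ((t + 1).choose k : ℚ) * (1 + t - k) := by
      have h5 := congrArg (Nat.cast : ℕ → ℚ) hnat
      push_cast [hkt] at h5
      linear_combination h5
    have hd : (1 + (t : ℚ) - k) ≠ 0 := by
      have : (k : ℚ) ≤ t := by exact_mod_cast hkt
      linarith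
    have ht1 : ((t : ℚ) + 1) ≠ 0 := by positivity
    have key : (t.choose k : ℚ) / (1 + t - k) = ((t + 1).choose k : ℚ) / (t + 1) := by
      rw [div_eq_div_iff hd ht1]; linear_combination hcast
    rw [mul_comm (t.choose k : ℚ) (bernoulli k), mul_div_assoc, key]; ring
  rw [sum_congr rfl h1, ← mul_sum, sum_bernoulli, if_neg (by omega : ¬ t + 1 = 1), mul_zero]

lemma triangle (f : ℕ → ℕ → ℚ) (j : ℕ) :
    ∑ k ∈ range (j + 1), ∑ r ∈ range (j + 1 - k), f k r =
      ∑ t ∈ range (j + 1), ∑ k ∈ range (t + 1), f k (t - k) := by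
  rw [Finset.sum_sigma', Finset.sum_sigma']
  refine Finset.sum_nbij'
    (fun p : Σ _ : ℕ, ℕ => (⟨p.1 + p.2, p.1⟩ : Σ _ : ℕ, ℕ))
    (fun p : Σ _ : ℕ, ℕ => (⟨p.2, p.1 - p.2⟩ : Σ _ : ℕ, ℕ)) ?_ ?_ ?_ ?_ ?_
  · rintro ⟨a, b⟩ hp
    simp only [Finset.mem_sigma, Finset.mem_range] at hp ⊢
    omega
  · rintro ⟨a, b⟩ hp
    simp only [Finset.mem_sigma, Finset.mem_range] at hp ⊢
    omega
  · rintro ⟨a, b⟩ hp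
    simp
  · rintro ⟨a, b⟩ hp
    simp only [Finset.mem_sigma, Finset.mem_range] at hp
    show (⟨b + (a - b), b⟩ : Σ _ : ℕ, ℕ) = ⟨a, b⟩
    rw [show b + (a - b) = a by omega]
  · rintro ⟨a, b⟩ hp
    simp

lemma keyQ (j u : ℕ) (h : j < u) :
    ∑ ℓ ∈ Icc (j + 1) u,
      (u.choose ℓ : ℚ) * (∑ k ∈ range (j + 1), (ℓ.choose k : ℚ) * bernoulli k / (1 + ℓ - k)) *
        bernoulli (u - ℓ) = - bernoulli u := by
  have step1 : ∀ ℓ ∈ Icc (j + 1) u,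
      (u.choose ℓ : ℚ) * (∑ k ∈ range (j + 1), (ℓ.choose k : ℚ) * bernoulli k / (1 + ℓ - k)) *
        bernoulli (u - ℓ) =
      ∑ k ∈ range (j + 1),
        (u.choose k : ℚ) * bernoulli k *
          (((u - k).choose (ℓ - k) : ℚ) * bernoulli (u - k - (ℓ - k)) / (1 + ((ℓ - k : ℕ) : ℚ))) := by
    intro ℓ hℓ
    rw [mem_Icc] at hℓ
    rw [mul_comm, ← mul_assoc, Finset.mul_sum]
    refine sum_congr rfl fun k hk => ?_
    have hkj : k ≤ j := by simpa [Nat.lt_succ_iff] using hk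
    have hkℓ : k ≤ ℓ := by omega
    have hcmQ : (u.choose ℓ : ℚ) * (ℓ.choose k : ℚ) =
        (u.choose k : ℚ) * ((u - k).choose (ℓ - k) : ℚ) := by
      exact_mod_cast congrArg (Nat.cast : ℕ → ℚ) (Nat.choose_mul (n := u) hkℓ)
    have hden : (1 + (ℓ : ℚ) - k) = (1 + ((ℓ - k : ℕ) : ℚ)) := by push_cast [hkℓ]; ring
    have hber : u - k - (ℓ - k) = u - ℓ := by omega
    have hne : (1 + ((ℓ - k : ℕ) : ℚ)) ≠ 0 := by positivity
    rw [hden, hber]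
    linear_combination (bernoulli (u - ℓ) * bernoulli k / (1 + ((ℓ - k : ℕ) : ℚ))) * hcmQ
  rw [sum_congr rfl step1, Finset.sum_comm]
  have step2 : ∀ k ∈ range (j + 1),
      ∑ ℓ ∈ Icc (j + 1) u,
        (u.choose k : ℚ) * bernoulli k *
          (((u - k).choose (ℓ - k) : ℚ) * bernoulli (u - k - (ℓ - k)) / (1 + ((ℓ - k : ℕ) : ℚ))) =
      - ∑ r ∈ range (j + 1 - k),
          (u.choose k : ℚ) * bernoulli k *
            (((u - k).choose r : ℚ) * bernoulli (u - k - r) / (1 + (r : ℚ))) := by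
    intro k hk
    have hkj : k ≤ j := by simpa [Nat.lt_succ_iff] using hk
    have hre : ∑ ℓ ∈ Icc (j + 1) u,
        (u.choose k : ℚ) * bernoulli k *
          (((u - k).choose (ℓ - k) : ℚ) * bernoulli (u - k - (ℓ - k)) / (1 + ((ℓ - k : ℕ) : ℚ))) =
        ∑ r ∈ Icc (j + 1 - k) (u - k),
          (u.choose k : ℚ) * bernoulli k *
            (((u - k).choose r : ℚ) * bernoulli (u - k - r) / (1 + (r : ℚ))) := by
      refine Finset.sum_nbij' (fun ℓ => ℓ - k) (fun r => r + k) ?_ ?_ ?_ ?_ ?_ <;>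
          intro a ha <;> simp only [mem_Icc] at ha ⊢ <;> try omega
    rw [hre]
    have hsplit : ∑ r ∈ range (j + 1 - k),
          (u.choose k : ℚ) * bernoulli k *
            (((u - k).choose r : ℚ) * bernoulli (u - k - r) / (1 + (r : ℚ))) +
        ∑ r ∈ Icc (j + 1 - k) (u - k),
          (u.choose k : ℚ) * bernoulli k *
            (((u - k).choose r : ℚ) * bernoulli (u - k - r) / (1 + (r : ℚ))) =
        ∑ r ∈ range (u - k + 1),
          (u.choose k : ℚ) * bernoulli k *
            (((u - k).choose r : ℚ) * bernoulli (u - k - r) / (1 + (r : ℚ))) := by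
      simp only [range_eq_Ico]
      rw [show Icc (j + 1 - k) (u - k) = Ico (j + 1 - k) (u - k + 1) by
        rw [Finset.Ico_add_one_right_eq_Icc]]
      exact Finset.sum_Ico_consecutive _ (by omega) (by omega)
    have hfull : ∑ r ∈ range (u - k + 1),
          (u.choose k : ℚ) * bernoulli k *
            (((u - k).choose r : ℚ) * bernoulli (u - k - r) / (1 + (r : ℚ))) = 0 := by
      rw [← mul_sum]
      have h0 : ∑ r ∈ range (u - k + 1),
          ((u - k).choose r : ℚ) * bernoulli (u - k - r) / (1 + (r : ℚ)) = 0 := by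
        have := lemA (u - k)
        rwa [if_neg (by omega : ¬ u - k = 0)] at this
      rw [h0, mul_zero]
    linarith [hsplit, hfull]
  rw [sum_congr rfl step2]
  rw [Finset.sum_neg_distrib]
  rw [triangle (fun k r => (u.choose k : ℚ) * bernoulli k *
    (((u - k).choose r : ℚ) * bernoulli (u - k - r) / (1 + (r : ℚ)))) j]
  rw [Finset.sum_eq_single_of_mem 0 (by simp)]
  · simp
  · intro t ht htne
    have htj : t ≤ j := by simpa [Nat.lt_succ_iff] using ht
    have ht1 : 1 ≤ t := by omega
    have step3 : ∀ k ∈ range (t + 1),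
        (u.choose k : ℚ) * bernoulli k *
          (((u - k).choose (t - k) : ℚ) * bernoulli (u - k - (t - k)) / (1 + ((t - k : ℕ) : ℚ))) =
        (u.choose t : ℚ) * bernoulli (u - t) * ((t.choose k : ℚ) * bernoulli k / (1 + t - k)) := by
      intro k hk
      have hkt : k ≤ t := by simpa [Nat.lt_succ_iff] using hk
      have hcmQ : (u.choose t : ℚ) * (t.choose k : ℚ) =
          (u.choose k : ℚ) * ((u - k).choose (t - k) : ℚ) := by
        exact_mod_cast congrArg (Nat.cast : ℕ → ℚ) (Nat.choose_mul (n := u) hkt)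
      have hden : (1 + ((t - k : ℕ) : ℚ)) = (1 + (t : ℚ) - k) := by push_cast [hkt]; ring
      have hber : u - k - (t - k) = u - t := by omega
      have hne : (1 + (t : ℚ) - k) ≠ 0 := by
        have : (k : ℚ) ≤ t := by exact_mod_cast hkt
        linarith
      rw [hden, hber]
      linear_combination (-(bernoulli (u - t) * bernoulli k) / (1 + (t : ℚ) - k)) * hcmQ
    rw [sum_congr rfl step3, ← mul_sum, lemB t ht1, mul_zero]

lemma keyR (j u : ℕ) (h : j < u) :
    ∑ ℓ ∈ Icc (j + 1) u,
      (u.choose ℓ : ℝ) *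
        (∑ k ∈ range (j + 1), (ℓ.choose k : ℝ) * (bernoulli k : ℝ) / (1 + (ℓ : ℝ) - (k : ℝ))) *
        (bernoulli (u - ℓ) : ℝ) = - (bernoulli u : ℝ) := by
  have h0 := congrArg (fun q : ℚ => (q : ℝ)) (keyQ j u h)
  push_cast at h0
  convert h0 using 1

lemma expandShap (d : ℕ) (v : (Fin d → ℝ) → Finset (Fin d) → ℝ) (x : Fin d → ℝ)
    (n : ℕ) (S : Finset (Fin d)) (hSn : S.card ≤ n) (hnd : n ≤ d) :
    nShapley d v n x S =
      ∑ U ∈ Sᶜ.powerset,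
        (if S.card + U.card ≤ n then (bernoulli U.card : ℝ) else 0) *
          deltaContribution d v x (S ∪ U) := by
  have hmaps : ∀ U ∈ Sᶜ.powerset, U.card ∈ range (d + 1) := by
    intro U _
    simp only [mem_range, Nat.lt_succ_iff]
    calc U.card ≤ Fintype.card (Fin d) := Finset.card_le_univ U
      _ = d := Fintype.card_fin d
  rw [← Finset.sum_fiberwise_of_maps_to hmaps]
  rw [nShapley]
  have hinner : ∀ k ∈ range (n - S.card + 1),
      (∑ K ∈ Sᶜ.powerset.filter (fun K => K.card = k),
        (bernoulli k : ℝ) * deltaContribution d v x (S ∪ K)) =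
      ∑ K ∈ Sᶜ.powerset.filter (fun K => K.card = k),
        (if S.card + K.card ≤ n then (bernoulli K.card : ℝ) else 0) *
          deltaContribution d v x (S ∪ K) := by
    intro k hk
    refine sum_congr rfl fun K hK => ?_
    have hKc : K.card = k := (mem_filter.mp hK).2
    have hle : S.card + K.card ≤ n := by
      simp only [mem_range, Nat.lt_succ_iff] at hk; omega
    rw [if_pos hle, hKc]
  rw [sum_congr rfl hinner]
  refine Finset.sum_subset ?_ ?_
  · intro k hk; simp only [mem_range] at *; omega
  · intro k hk hk'
    refine Finset.sum_eq_zero fun K hK => ?_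
    have hKc : K.card = k := (mem_filter.mp hK).2
    have hno : ¬ (S.card + K.card ≤ n) := by
      simp only [mem_range, Nat.lt_succ_iff] at hk hk'; omega
    rw [if_neg hno, zero_mul]

lemma expandUnion (d : ℕ) (v : (Fin d → ℝ) → Finset (Fin d) → ℝ) (x : Fin d → ℝ)
    (n : ℕ) (S K : Finset (Fin d)) (hK : K ⊆ Sᶜ) (hn : S.card + K.card ≤ n) (hnd : n ≤ d) :
    nShapley d v n x (S ∪ K) =
      ∑ K' ∈ (Sᶜ \ K).powerset,
        (if S.card + K.card + K'.card ≤ n then (bernoulli K'.card : ℝ) else 0) *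
          deltaContribution d v x (S ∪ (K ∪ K')) := by
  have hdisj : Disjoint S K := by
    rw [Finset.disjoint_right]
    intro a haK haS
    exact (Finset.mem_compl.mp (hK haK)) haS
  have hcard : (S ∪ K).card = S.card + K.card := Finset.card_union_of_disjoint hdisj
  have hcompl : (S ∪ K)ᶜ = Sᶜ \ K := by
    ext a; simp only [Finset.mem_compl, Finset.mem_sdiff, Finset.mem_union]; tauto
  rw [expandShap d v x n (S ∪ K) (by omega) hnd]
  rw [hcompl]
  refine sum_congr rfl fun K' _ => ?_
  rw [hcard, union_assoc]

lemma coeffEq (d m n : ℕ) (hmn : m ≤ n) (S : Finset (Fin d)) (hSm : S.card ≤ m)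
    (c : ℕ → ℕ → ℝ)
    (hc : ∀ j ℓ : ℕ,
      c j ℓ = ∑ k ∈ Finset.range (j + 1),
        (ℓ.choose k : ℝ) * (bernoulli k : ℝ) / (1 + (ℓ : ℝ) - (k : ℝ)))
    (U : Finset (Fin d)) :
    (if S.card + U.card ≤ m then (bernoulli U.card : ℝ) else 0) =
      (if S.card + U.card ≤ n then (bernoulli U.card : ℝ) else 0) +
      ∑ K ∈ U.powerset,
        (if m < S.card + K.card ∧ S.card + K.card ≤ n then c (m - S.card) K.card else 0) *
          (if S.card + U.card ≤ n then (bernoulli (U.card - K.card) : ℝ) else 0) := by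
  by_cases hn : S.card + U.card ≤ n
  · by_cases hm2 : S.card + U.card ≤ m
    · rw [if_pos hm2, if_pos hn]
      have hz : ∀ K ∈ U.powerset, (if m < S.card + K.card ∧ S.card + K.card ≤ n
            then c (m - S.card) K.card else 0) *
          (if S.card + U.card ≤ n then (bernoulli (U.card - K.card) : ℝ) else 0) = 0 := by
        intro K hK
        have hKU : K.card ≤ U.card := Finset.card_le_card (Finset.mem_powerset.mp hK)
        rw [if_neg (by omega : ¬ (m < S.card + K.card ∧ S.card + K.card ≤ n)), zero_mul]
      rw [Finset.sum_eq_zero hz, add_zero]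
    · -- m < S.card + U.card ≤ n
      rw [if_neg hm2, if_pos hn]
      set j := m - S.card with hj
      have hju : j < U.card := by omega
      have h1 : ∀ K ∈ U.powerset,
          (if m < S.card + K.card ∧ S.card + K.card ≤ n then c (m - S.card) K.card else 0) *
            (if S.card + U.card ≤ n then (bernoulli (U.card - K.card) : ℝ) else 0) =
          (if j < K.card then c j K.card else 0) * (bernoulli (U.card - K.card) : ℝ) := by
        intro K hK
        have hKU : K.card ≤ U.card := Finset.card_le_card (Finset.mem_powerset.mp hK)
        rw [if_pos hn]
        by_cases hjk : j < K.card
        · rw [if_pos (by omega : m < S.card + K.card ∧ S.card + K.card ≤ n), if_pos hjk]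
        · rw [if_neg (by omega : ¬ (m < S.card + K.card ∧ S.card + K.card ≤ n)), if_neg hjk]
      rw [sum_congr rfl h1]
      have hmaps2 : ∀ K ∈ U.powerset, K.card ∈ range (U.card + 1) := by
        intro K hK
        simp only [mem_range, Nat.lt_succ_iff]
        exact Finset.card_le_card (Finset.mem_powerset.mp hK)
      rw [← Finset.sum_fiberwise_of_maps_to hmaps2]
      have h2 : ∀ ℓ ∈ range (U.card + 1),
          (∑ K ∈ U.powerset.filter (fun K => K.card = ℓ),
            (if j < K.card then c j K.card else 0) * (bernoulli (U.card - K.card) : ℝ)) =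
          (U.card.choose ℓ : ℝ) *
            ((if j < ℓ then c j ℓ else 0) * (bernoulli (U.card - ℓ) : ℝ)) := by
        intro ℓ _
        have hconst : ∀ K ∈ U.powerset.filter (fun K => K.card = ℓ),
            (if j < K.card then c j K.card else 0) * (bernoulli (U.card - K.card) : ℝ) =
            (if j < ℓ then c j ℓ else 0) * (bernoulli (U.card - ℓ) : ℝ) := by
          intro K hK
          rw [(mem_filter.mp hK).2]
        rw [sum_congr rfl hconst, Finset.sum_const, ← Finset.powersetCard_eq_filter,
          Finset.card_powersetCard, nsmul_eq_mul]
      rw [sum_congr rfl h2]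
      have h3 : ∑ ℓ ∈ range (U.card + 1),
          (U.card.choose ℓ : ℝ) * ((if j < ℓ then c j ℓ else 0) * (bernoulli (U.card - ℓ) : ℝ)) =
          ∑ ℓ ∈ Icc (j + 1) U.card,
            (U.card.choose ℓ : ℝ) * (c j ℓ) * (bernoulli (U.card - ℓ) : ℝ) := by
        rw [← Finset.sum_subset (show Icc (j + 1) U.card ⊆ range (U.card + 1) by
            intro ℓ hℓ; simp only [mem_Icc] at hℓ; simp only [mem_range]; omega)
          (fun ℓ hℓ hℓ' => by
            have : ¬ j < ℓ := by
              simp only [mem_range] at hℓ; simp only [mem_Icc] at hℓ'; omega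
            rw [if_neg this, zero_mul, mul_zero])]
        refine sum_congr rfl fun ℓ hℓ => ?_
        have : j < ℓ := by simp only [mem_Icc] at hℓ; omega
        rw [if_pos this, mul_assoc]
      rw [h3]
      have h4 : ∀ ℓ ∈ Icc (j + 1) U.card,
          (U.card.choose ℓ : ℝ) * (c j ℓ) * (bernoulli (U.card - ℓ) : ℝ) =
          (U.card.choose ℓ : ℝ) *
            (∑ k ∈ range (j + 1), (ℓ.choose k : ℝ) * (bernoulli k : ℝ) / (1 + (ℓ : ℝ) - (k : ℝ))) *
            (bernoulli (U.card - ℓ) : ℝ) := by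
        intro ℓ _; rw [hc j ℓ]
      rw [sum_congr rfl h4, keyR j U.card hju]
      ring
  · rw [if_neg (by omega : ¬ S.card + U.card ≤ m), if_neg hn]
    simp [hn]

/-- Relationship between `n`-Shapley Values of different orders: for `1 ≤ m ≤ n ≤ d`
and nonempty `S ⊆ [d]` with `|S| ≤ m`,
`Φ^m_S(x) = Φ^n_S(x) + ∑_{K ⊆ [d]∖S, m < |S|+|K| ≤ n} c_{m-|S|,|K|} · Φ^n_{S∪K}(x)`,
where `c_{j,ℓ} = ∑_{k=0}^{j} binom(ℓ,k) · B_k/(1+ℓ-k)`. -/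
theorem nShapley_order_relation (d : ℕ) (hd : 1 ≤ d)
    (v : (Fin d → ℝ) → Finset (Fin d) → ℝ) (x : Fin d → ℝ)
    (m n : ℕ) (hm : 1 ≤ m) (hmn : m ≤ n) (hnd : n ≤ d)
    (S : Finset (Fin d)) (hS : S.Nonempty) (hSm : S.card ≤ m)
    (c : ℕ → ℕ → ℝ)
    (hc : ∀ j ℓ : ℕ,
      c j ℓ = ∑ k ∈ Finset.range (j + 1),
        (ℓ.choose k : ℝ) * (bernoulli k : ℝ) / (1 + (ℓ : ℝ) - (k : ℝ))) :
    nShapley d v m x S =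
      nShapley d v n x S +
        ∑ K ∈ Sᶜ.powerset.filter (fun K => m < S.card + K.card ∧ S.card + K.card ≤ n),
          c (m - S.card) K.card * nShapley d v n x (S ∪ K) := by
  classical
  have hRHS : ∑ K ∈ Sᶜ.powerset.filter (fun K => m < S.card + K.card ∧ S.card + K.card ≤ n),
        c (m - S.card) K.card * nShapley d v n x (S ∪ K)
      = ∑ U ∈ Sᶜ.powerset,
          (∑ K ∈ U.powerset,
            (if m < S.card + K.card ∧ S.card + K.card ≤ n then c (m - S.card) K.card else 0) *
              (if S.card + U.card ≤ n then (bernoulli (U.card - K.card) : ℝ) else 0)) *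
            deltaContribution d v x (S ∪ U) := by
    rw [Finset.sum_filter]
    have hD : ∀ K ∈ Sᶜ.powerset,
        (if m < S.card + K.card ∧ S.card + K.card ≤ n then
          c (m - S.card) K.card * nShapley d v n x (S ∪ K) else 0) =
        ∑ K' ∈ (Sᶜ \ K).powerset,
          (if m < S.card + K.card ∧ S.card + K.card ≤ n then c (m - S.card) K.card else 0) *
            ((if S.card + K.card + K'.card ≤ n then (bernoulli K'.card : ℝ) else 0) *
              deltaContribution d v x (S ∪ (K ∪ K'))) := by
      intro K hK
      by_cases hP : m < S.card + K.card ∧ S.card + K.card ≤ n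
      · rw [if_pos hP,
          expandUnion d v x n S K (Finset.mem_powerset.mp hK) hP.2 hnd, Finset.mul_sum]
        exact sum_congr rfl fun K' _ => by rw [if_pos hP]
      · rw [if_neg hP]
        symm
        exact Finset.sum_eq_zero fun K' _ => by rw [if_neg hP, zero_mul]
    rw [sum_congr rfl hD]
    have hbij : ∑ K ∈ Sᶜ.powerset, ∑ K' ∈ (Sᶜ \ K).powerset,
          (if m < S.card + K.card ∧ S.card + K.card ≤ n then c (m - S.card) K.card else 0) *
            ((if S.card + K.card + K'.card ≤ n then (bernoulli K'.card : ℝ) else 0) *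
              deltaContribution d v x (S ∪ (K ∪ K'))) =
        ∑ U ∈ Sᶜ.powerset, ∑ K ∈ U.powerset,
          (if m < S.card + K.card ∧ S.card + K.card ≤ n then c (m - S.card) K.card else 0) *
            ((if S.card + U.card ≤ n then (bernoulli (U.card - K.card) : ℝ) else 0) *
              deltaContribution d v x (S ∪ U)) := by
      rw [Finset.sum_sigma', Finset.sum_sigma']
      refine Finset.sum_nbij'
        (fun p : Σ _ : Finset (Fin d), Finset (Fin d) =>
          (⟨p.1 ∪ p.2, p.1⟩ : Σ _ : Finset (Fin d), Finset (Fin d)))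
        (fun p : Σ _ : Finset (Fin d), Finset (Fin d) =>
          (⟨p.2, p.1 \ p.2⟩ : Σ _ : Finset (Fin d), Finset (Fin d))) ?_ ?_ ?_ ?_ ?_
      · rintro ⟨K, K'⟩ hp
        simp only [Finset.mem_sigma, Finset.mem_powerset] at hp ⊢
        exact ⟨Finset.union_subset hp.1 (hp.2.trans (Finset.sdiff_subset)),
          Finset.subset_union_left⟩
      · rintro ⟨U, K⟩ hp
        simp only [Finset.mem_sigma, Finset.mem_powerset] at hp ⊢
        exact ⟨hp.2.trans hp.1, Finset.sdiff_subset_sdiff hp.1 Subset.rfl⟩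
      · rintro ⟨K, K'⟩ hp
        simp only [Finset.mem_sigma, Finset.mem_powerset] at hp
        have hdisj : Disjoint K K' := Finset.disjoint_left.mpr
          (fun a haK haK' => (Finset.mem_sdiff.mp (hp.2 haK')).2 haK)
        show (⟨K, (K ∪ K') \ K⟩ : Σ _ : Finset (Fin d), Finset (Fin d)) = ⟨K, K'⟩
        rw [Finset.union_sdiff_cancel_left hdisj]
      · rintro ⟨U, K⟩ hp
        simp only [Finset.mem_sigma, Finset.mem_powerset] at hp
        show (⟨K ∪ U \ K, K⟩ : Σ _ : Finset (Fin d), Finset (Fin d)) = ⟨U, K⟩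
        rw [Finset.union_sdiff_of_subset hp.2]
      · rintro ⟨K, K'⟩ hp
        simp only [Finset.mem_sigma, Finset.mem_powerset] at hp
        have hdisj : Disjoint K K' := Finset.disjoint_left.mpr
          (fun a haK haK' => (Finset.mem_sdiff.mp (hp.2 haK')).2 haK)
        have hcard : (K ∪ K').card = K.card + K'.card := Finset.card_union_of_disjoint hdisj
        show _ = _
        dsimp only
        rw [hcard, show K.card + K'.card - K.card = K'.card by omega, ← add_assoc]
    rw [hbij]
    refine sum_congr rfl fun U _ => ?_
    rw [Finset.sum_mul]
    exact sum_congr rfl fun K _ => by rw [mul_assoc]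
  rw [hRHS, expandShap d v x m S hSm (hmn.trans hnd), expandShap d v x n S (hSm.trans hmn) hnd,
    ← Finset.sum_add_distrib]
  refine sum_congr rfl fun U _ => ?_
  rw [← add_mul, coeffEq d m n hmn S hSm c hc U]
end

section
/- Shapley Values from n-Shapley Values: for every value function v, every x ∈ ℝ^d, every 1 ≤ n ≤ d and every feature i ∈ [d], Φ^1_{{i}}(x) = ∑_{k=0}^{n−1} (1/(k+1)) · ∑_{K ⊆ [d]∖{i}, |K| = k} Φ^n_{K∪{i}}(x); that is, Φ^1_{{i}} = Φ^n_{{i}} + (1/2)·∑_{j ≠ i} Φ^n_{{i,j}} + … + (1/n)·∑_{K ⊆ [d]∖{i}, |K| = n−1} Φ^n_{K∪{i}}. -/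
open Finset

lemma key_q (u : ℕ) :
    ∑ j ∈ Finset.range (u + 1), (u.choose j : ℚ) * (1 / ((j : ℚ) + 1) * bernoulli (u - j))
      = if u = 0 then 1 else 0 := by
  have h1 : ∀ j ∈ Finset.range (u + 1),
      (u.choose j : ℚ) * (1 / ((j : ℚ) + 1) * bernoulli (u - j))
        = (1 / ((u : ℚ) + 1)) * (((u + 1).choose (j + 1) : ℚ) * bernoulli (u - j)) := by
    intro j hj
    have hnat : (u + 1) * u.choose j = (u + 1).choose (j + 1) * (j + 1) := by
      simpa [Nat.succ_eq_add_one] using Nat.add_one_mul_choose_eq u j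
    have hq : ((u : ℚ) + 1) * (u.choose j : ℚ) = ((u + 1).choose (j + 1) : ℚ) * ((j : ℚ) + 1) := by
      exact_mod_cast congrArg (fun m : ℕ => (m : ℚ)) hnat
    have hj1 : ((j : ℚ) + 1) ≠ 0 := by positivity
    have hu1 : ((u : ℚ) + 1) ≠ 0 := by positivity
    field_simp
    ring_nf
    ring_nf at hq
    linear_combination (bernoulli (u - j)) * hq
  rw [Finset.sum_congr rfl h1, ← Finset.mul_sum]
  have h2 : ∑ j ∈ Finset.range (u + 1), (((u + 1).choose (j + 1) : ℚ) * bernoulli (u - j))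
      = ∑ j ∈ Finset.range (u + 1), (((u + 1).choose j : ℚ) * bernoulli j) := by
    rw [← Finset.sum_range_reflect (fun j => ((u + 1).choose j : ℚ) * bernoulli j) (u + 1)]
    refine Finset.sum_congr rfl fun j hj => ?_
    simp only [Finset.mem_range, Nat.lt_succ_iff] at hj
    have h3 : u + 1 - 1 - j = u - j := by omega
    have h4 : (u + 1).choose (u - j) = (u + 1).choose (j + 1) := by
      have : u + 1 - (j + 1) = u - j := by omega
      rw [← this, Nat.choose_symm (by omega)]
    rw [h3, h4]
  rw [h2, sum_bernoulli]
  rcases Nat.eq_zero_or_pos u with hu | hu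
  · simp [hu]
  · have : u + 1 ≠ 1 := by omega
    simp [this, Nat.pos_iff_ne_zero.mp hu]

lemma key_r (u : ℕ) :
    ∑ j ∈ Finset.range (u + 1), (u.choose j : ℝ) * (1 / ((j : ℝ) + 1) * ((bernoulli (u - j) : ℚ) : ℝ))
      = if u = 0 then 1 else 0 := by
  have h := congrArg (fun q : ℚ => (q : ℝ)) (key_q u)
  push_cast at h
  convert h using 1
  split <;> simp

lemma coeff {α : Type*} [DecidableEq α] (U : Finset α) :
    ∑ K ∈ U.powerset, 1 / ((K.card : ℝ) + 1) * ((bernoulli (U.card - K.card) : ℚ) : ℝ)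
      = if U = ∅ then 1 else 0 := by
  have := Finset.sum_powerset_apply_card
    (f := fun m => 1 / ((m : ℝ) + 1) * ((bernoulli (U.card - m) : ℚ) : ℝ)) (x := U)
  rw [this]
  have h := key_r U.card
  rw [show (if U = ∅ then (1:ℝ) else 0) = if U.card = 0 then 1 else 0 by
    simp [Finset.card_eq_zero]]
  rw [← h]
  refine Finset.sum_congr rfl fun j hj => ?_
  rw [nsmul_eq_mul]

lemma flatten {α : Type*} [DecidableEq α] (s : Finset (Finset α)) (N : ℕ) (f : Finset α → ℝ) :
    ∑ m ∈ Finset.range N, ∑ M ∈ s.filter (fun M => M.card = m), f M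
      = ∑ M ∈ s.filter (fun M => M.card < N), f M := by
  rw [← Finset.sum_fiberwise_of_maps_to (g := Finset.card) (t := Finset.range N)
      (fun M hM => by simp only [Finset.mem_filter] at hM; exact Finset.mem_range.mpr hM.2) f]
  refine Finset.sum_congr rfl fun m hm => Finset.sum_congr ?_ fun _ _ => rfl
  simp only [Finset.mem_range] at hm
  ext M
  simp only [Finset.mem_filter, and_assoc]
  constructor
  · rintro ⟨h1, h2⟩; exact ⟨h1, h2 ▸ hm, h2⟩
  · rintro ⟨h1, h2, h3⟩; exact ⟨h1, h3⟩

lemma regroup {α : Type*} [DecidableEq α] (c : Finset α) (n : ℕ) (f : Finset α → Finset α → ℝ) :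
    ∑ K ∈ c.powerset.filter (fun K => K.card < n),
      ∑ M ∈ (c \ K).powerset.filter (fun M => K.card + M.card < n), f K M
    = ∑ U ∈ c.powerset.filter (fun U => U.card < n),
        ∑ K ∈ U.powerset, f K (U \ K) := by
  rw [Finset.sum_sigma', Finset.sum_sigma']
  refine Finset.sum_nbij' (i := fun p => ⟨p.1 ∪ p.2, p.1⟩) (j := fun p => ⟨p.2, p.1 \ p.2⟩)
    ?_ ?_ ?_ ?_ ?_
  · rintro ⟨K, M⟩ hp
    simp only [Finset.mem_sigma, Finset.mem_filter, Finset.mem_powerset] at hp ⊢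
    obtain ⟨⟨hKc, hKn⟩, hMc, hKM⟩ := hp
    have hdisj : Disjoint K M := Finset.disjoint_of_subset_right hMc Finset.disjoint_sdiff
    refine ⟨⟨Finset.union_subset hKc (hMc.trans (Finset.sdiff_subset)), ?_⟩,
      Finset.subset_union_left⟩
    rw [Finset.card_union_of_disjoint hdisj]; exact hKM
  · rintro ⟨U, K⟩ hp
    simp only [Finset.mem_sigma, Finset.mem_filter, Finset.mem_powerset] at hp ⊢
    obtain ⟨⟨hUc, hUn⟩, hKU⟩ := hp
    refine ⟨⟨hKU.trans hUc, lt_of_le_of_lt (Finset.card_le_card hKU) hUn⟩,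
      Finset.sdiff_subset_sdiff hUc (le_refl K), ?_⟩
    rw [add_comm, Finset.card_sdiff_add_card_eq_card hKU]; exact hUn
  · rintro ⟨K, M⟩ hp
    simp only [Finset.mem_sigma, Finset.mem_filter, Finset.mem_powerset] at hp
    obtain ⟨_, hMc, _⟩ := hp
    have hdisj : Disjoint K M := Finset.disjoint_of_subset_right hMc Finset.disjoint_sdiff
    simp [Finset.union_sdiff_cancel_left hdisj]
  · rintro ⟨U, K⟩ hp
    simp only [Finset.mem_sigma, Finset.mem_filter, Finset.mem_powerset] at hp
    simp [Finset.union_sdiff_of_subset hp.2]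
  · rintro ⟨K, M⟩ hp
    simp only [Finset.mem_sigma, Finset.mem_filter, Finset.mem_powerset] at hp
    obtain ⟨_, hMc, _⟩ := hp
    have hdisj : Disjoint K M := Finset.disjoint_of_subset_right hMc Finset.disjoint_sdiff
    simp [Finset.union_sdiff_cancel_left hdisj]


/-- Shapley Values from `n`-Shapley Values: for every value function `v`, point
`x`, `1 ≤ n ≤ d` and feature `i ∈ [d]`,
`Φ^1_{{i}}(x) = ∑_{k=0}^{n-1} (1/(k+1)) · ∑_{K ⊆ [d]∖{i}, |K| = k} Φ^n_{K∪{i}}(x)`. -/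
theorem shapley_from_nShapley (d : ℕ) (hd : 1 ≤ d)
    (v : (Fin d → ℝ) → Finset (Fin d) → ℝ) (x : Fin d → ℝ)
    (n : ℕ) (hn : 1 ≤ n) (hnd : n ≤ d) (i : Fin d) :
    nShapley d v 1 x {i} =
      ∑ k ∈ Finset.range n, (1 / ((k : ℝ) + 1)) *
        ∑ K ∈ ({i} : Finset (Fin d))ᶜ.powerset.filter (fun K => K.card = k),
          nShapley d v n x (K ∪ {i}) := by
  classical
  have hL : nShapley d v 1 x {i} = deltaContribution d v x {i} := by
    have hfilter : (({i} : Finset (Fin d))ᶜ.powerset.filter (fun K => K.card = 0)) = {∅} := by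
      ext K
      simp only [Finset.mem_filter, Finset.mem_powerset, Finset.card_eq_zero,
        Finset.mem_singleton]
      exact ⟨fun h => h.2, fun h => ⟨h ▸ Finset.empty_subset _, h⟩⟩
    rw [nShapley]
    simp only [Finset.card_singleton]
    rw [show 1 - 1 + 1 = 1 from rfl, Finset.sum_range_one, hfilter, Finset.sum_singleton]
    simp
  rw [hL]
  have step1 : ∀ k ∈ Finset.range n,
      (1 / ((k : ℝ) + 1)) * ∑ K ∈ ({i} : Finset (Fin d))ᶜ.powerset.filter (fun K => K.card = k),
        nShapley d v n x (K ∪ {i})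
      = ∑ K ∈ ({i} : Finset (Fin d))ᶜ.powerset.filter (fun K => K.card = k),
          ∑ M ∈ (({i} : Finset (Fin d))ᶜ \ K).powerset.filter (fun M => K.card + M.card < n),
            1 / ((K.card : ℝ) + 1) * ((bernoulli M.card : ℚ) : ℝ)
              * deltaContribution d v x ((K ∪ {i}) ∪ M) := by
    intro k hk
    rw [Finset.mul_sum]
    refine Finset.sum_congr rfl fun K hK => ?_
    simp only [Finset.mem_filter, Finset.mem_powerset] at hK
    obtain ⟨hKc, hKcard⟩ := hK
    have hik : i ∉ K := fun h => by simpa using hKc h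
    have hcard : (K ∪ {i}).card = K.card + 1 := by
      rw [Finset.union_comm, ← Finset.insert_eq, Finset.card_insert_of_notMem hik]
    have hkn : k < n := Finset.mem_range.mp hk
    have hcompl : (K ∪ {i})ᶜ = ({i} : Finset (Fin d))ᶜ \ K := by
      ext a
      simp only [Finset.compl_union, Finset.mem_inter, Finset.mem_compl, Finset.mem_sdiff,
        Finset.mem_singleton]
      tauto
    rw [nShapley, hcompl, hcard, hKcard]
    have hrange : n - (k + 1) + 1 = n - k := by omega
    rw [hrange]
    have hinner : ∀ m ∈ Finset.range (n - k),
        ∑ M ∈ ((({i} : Finset (Fin d))ᶜ \ K).powerset.filter (fun M => M.card = m)),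
          (bernoulli m : ℝ) * deltaContribution d v x ((K ∪ {i}) ∪ M)
        = ∑ M ∈ ((({i} : Finset (Fin d))ᶜ \ K).powerset.filter (fun M => M.card = m)),
          ((bernoulli M.card : ℚ) : ℝ) * deltaContribution d v x ((K ∪ {i}) ∪ M) := by
      intro m _
      refine Finset.sum_congr rfl fun M hM => ?_
      rw [(Finset.mem_filter.mp hM).2]
    rw [Finset.sum_congr rfl hinner,
      flatten (((({i} : Finset (Fin d))ᶜ \ K)).powerset) (n - k)
        (fun M => ((bernoulli M.card : ℚ) : ℝ) * deltaContribution d v x ((K ∪ {i}) ∪ M)),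
      Finset.mul_sum]
    have hpred : ((({i} : Finset (Fin d))ᶜ \ K).powerset.filter (fun M => M.card < n - k))
        = ((({i} : Finset (Fin d))ᶜ \ K).powerset.filter (fun M => k + M.card < n)) := by
      apply Finset.filter_congr
      intro M _
      omega
    rw [hpred]
    exact Finset.sum_congr rfl fun M _ => by ring
  rw [Finset.sum_congr rfl step1,
    flatten (({i} : Finset (Fin d))ᶜ.powerset) n
      (fun K => ∑ M ∈ (({i} : Finset (Fin d))ᶜ \ K).powerset.filter
          (fun M => K.card + M.card < n),
        1 / ((K.card : ℝ) + 1) * ((bernoulli M.card : ℚ) : ℝ)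
          * deltaContribution d v x ((K ∪ {i}) ∪ M)),
    regroup (({i} : Finset (Fin d))ᶜ) n
      (fun K M => 1 / ((K.card : ℝ) + 1) * ((bernoulli M.card : ℚ) : ℝ)
          * deltaContribution d v x ((K ∪ {i}) ∪ M))]
  have stepU : ∀ U ∈ ({i} : Finset (Fin d))ᶜ.powerset.filter (fun U => U.card < n),
      ∑ K ∈ U.powerset,
        1 / ((K.card : ℝ) + 1) * ((bernoulli (U \ K).card : ℚ) : ℝ)
          * deltaContribution d v x ((K ∪ {i}) ∪ (U \ K))
      = (if U = ∅ then 1 else 0) * deltaContribution d v x ({i} ∪ U) := by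
    intro U _
    rw [← coeff U, Finset.sum_mul]
    refine Finset.sum_congr rfl fun K hK => ?_
    have hKU : K ⊆ U := Finset.mem_powerset.mp hK
    rw [Finset.card_sdiff_of_subset hKU, Finset.union_comm K {i}, Finset.union_assoc,
      Finset.union_sdiff_of_subset hKU]
  rw [Finset.sum_congr rfl stepU]
  rw [Finset.sum_eq_single_of_mem ∅
    (by simp only [Finset.mem_filter, Finset.mem_powerset]
        exact ⟨Finset.empty_subset _, by simp only [Finset.card_empty]; omega⟩)
    (fun b _ hb => by simp [hb])]
  simp
end

section
/- Higher-order Shapley-GAM components of a GAM of order n vanish under the interventional value function: let μ be a probability measure on ℝ^d, let f : ℝ^d → ℝ be a generalized additive model of order n given by f(y) = ∑_{T ⊆ [d], |T| ≤ n} g_T(y) with each g_T bounded, measurable, and depending only on the coordinates of y in T, and let v(x,S) = ∫ f(P_S(x,z)) dμ(z) be the interventional value function. Then for every x ∈ ℝ^d and every T ⊆ [d] with |T| > n, ∑_{L ⊆ T} (−1)^{|T|−|L|} · v(x, L) = 0. -/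
open Finset MeasureTheory

/-- `interventionalValue d μ f x S = ∫ f(P_S(x,z)) dμ(z)`, where `P_S(x,z)` agrees
with `x` on `S` and with `z` outside of `S` (interventional SHAP). -/
noncomputable def interventionalValue (d : ℕ) (μ : Measure (Fin d → ℝ))
    (f : (Fin d → ℝ) → ℝ) (x : Fin d → ℝ) (S : Finset (Fin d)) : ℝ :=
  ∫ z, f (fun i => if i ∈ S then x i else z i) ∂μ

/-- Higher-order Shapley-GAM components of a GAM of order `n` vanish under the
interventional value function: if `f(y) = ∑_{T ⊆ [d], |T| ≤ n} g_T(y)` with each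
`g_T` bounded, measurable, and depending only on the coordinates in `T`, and
`v(x,S) = ∫ f(P_S(x,z)) dμ(z)` for a probability measure `μ`, then for every `x`
and every `T ⊆ [d]` with `|T| > n`,
`∑_{L ⊆ T} (-1)^{|T|-|L|} · v(x, L) = 0`. -/
theorem gam_moebius_vanishes (d : ℕ) (hd : 1 ≤ d) (n : ℕ)
    (μ : Measure (Fin d → ℝ)) [IsProbabilityMeasure μ]
    (f : (Fin d → ℝ) → ℝ) (g : Finset (Fin d) → (Fin d → ℝ) → ℝ)
    (hgmeas : ∀ T : Finset (Fin d), Measurable (g T))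
    (hgbdd : ∀ T : Finset (Fin d), ∃ C : ℝ, ∀ y : Fin d → ℝ, |g T y| ≤ C)
    (hgdep : ∀ (T : Finset (Fin d)) (y z : Fin d → ℝ),
      (∀ i ∈ T, y i = z i) → g T y = g T z)
    (hf : ∀ y : Fin d → ℝ,
      f y = ∑ T ∈ Finset.univ.filter (fun T : Finset (Fin d) => T.card ≤ n), g T y)
    (x : Fin d → ℝ) (T : Finset (Fin d)) (hT : n < T.card) :
    ∑ L ∈ T.powerset,
      (-1 : ℝ) ^ (T.card - L.card) * interventionalValue d μ f x L = 0 := by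

  classical
  have hIV : ∀ L : Finset (Fin d), interventionalValue d μ f x L =
      ∑ T' ∈ Finset.univ.filter (fun T' : Finset (Fin d) => T'.card ≤ n),
        interventionalValue d μ (g T') x L := by
    intro L
    unfold interventionalValue
    simp_rw [hf]
    rw [integral_finset_sum]
    intro T' _
    obtain ⟨C, hC⟩ := hgbdd T'
    have hmeas : Measurable fun z : Fin d → ℝ =>
        g T' (fun i => if i ∈ L then x i else z i) := by
      apply (hgmeas T').comp
      apply measurable_pi_lambda
      intro i
      by_cases h : i ∈ L
      · simp only [h, if_true]; exact measurable_const
      · simp only [h, if_false]; exact measurable_pi_apply i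
    exact (integrable_const C).mono' hmeas.aestronglyMeasurable
      (Filter.Eventually.of_forall fun z => by simpa using hC _)
  simp_rw [hIV, Finset.mul_sum]
  rw [Finset.sum_comm]
  refine Finset.sum_eq_zero fun T' hT' => ?_
  have hcard : T'.card ≤ n := (Finset.mem_filter.mp hT').2
  have hnot : ¬ T ⊆ T' := fun h => absurd (Finset.card_le_card h) (by omega)
  obtain ⟨j, hjT, hjT'⟩ := Finset.not_subset.mp hnot
  have hIVeq : ∀ L : Finset (Fin d), interventionalValue d μ (g T') x (insert j L) =
      interventionalValue d μ (g T') x L := by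
    intro L
    unfold interventionalValue
    congr 1
    funext z
    apply hgdep
    intro i hi
    have hij : i ≠ j := fun h => hjT' (h ▸ hi)
    simp [Finset.mem_insert, hij]
  have hTcard : T.card = (T.erase j).card + 1 := by
    rw [Finset.card_erase_of_mem hjT]
    have : 1 ≤ T.card := Finset.card_pos.mpr ⟨j, hjT⟩
    omega
  have hT_eq : T = insert j (T.erase j) := (Finset.insert_erase hjT).symm
  rw [hT_eq, Finset.sum_powerset_insert (Finset.notMem_erase j T),
    ← Finset.sum_add_distrib]
  apply Finset.sum_eq_zero
  intro L hL
  have hLsub : L ⊆ T.erase j := Finset.mem_powerset.mp hL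
  have hjL : j ∉ L := fun h => Finset.notMem_erase j T (hLsub h)
  have hcardins : (insert j L).card = L.card + 1 := Finset.card_insert_of_notMem hjL
  have hLle : L.card ≤ (T.erase j).card := Finset.card_le_card hLsub
  rw [hIVeq L, ← hT_eq, hcardins]
  have h1 : T.card - L.card = (T.card - (L.card + 1)) + 1 := by omega
  rw [h1, pow_succ]
  ring
end
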